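/- Let φ be a permutation of {1,…,k} that avoids the classical pattern 1-3-2, let m₀=k, m₁,…,m_r be its right-to-left maxima read from left to right, and write its canonical decomposition φ=(φ⁰,m₀,φ¹,m₁,…,φʳ,mʳ), where every entry of φⁱ is greater than every entry of φ^{i+1}. Let τ be a generalized pattern whose underlying permutation is φ and whose adjacency requirements occur only inside the blocks φⁱ (so τ=τ⁰-m₀-τ¹-m₁-⋯-τʳ-mʳ, each τⁱ being a generalized-pattern block whose underlying word is φⁱ). For 0≤j≤r define the prefixes π⁰=τ⁰ and πʲ=τ⁰-m₀-τ¹-m₁-⋯-τʲ-mⱼ for 1≤j≤r, and the suffixes σʲ=τʲ-mⱼ-⋯-τʳ-mᵣ for 0≤j≤r (each prefix and suffix regarded as a generalized pattern in its own right via order-isomorphic reduction of its letters), and set F_{π^{-1}}(x)=0. Then F_τ(x) = 1 + x·∑_{j=0}^{r} ( F_{πʲ}(x) − F_{π^{j-1}}(x) )·F_{σʲ}(x). -/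

import Mathlib

open Finset PowerSeries

/-- A generalized pattern in the sense of Babson–Steingrímsson: a permutation of
`Fin k` together with a set of (0-indexed) positions `j` such that the letters in
positions `j` and `j+1` must be adjacent in any occurrence. -/
structure GenPattern (k : ℕ) where
  perm : Equiv.Perm (Fin k)
  adj : Set ℕ

/-- `f` is an occurrence of the generalized pattern `p` in the permutation `π`. -/
def GenPattern.Occ {k n : ℕ} (p : GenPattern k) (π : Equiv.Perm (Fin n))
    (f : Fin k → Fin n) : Prop :=
  StrictMono f ∧
  (∀ a b : Fin k, π (f a) < π (f b) ↔ p.perm a < p.perm b) ∧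
  (∀ j : ℕ, j ∈ p.adj → ∀ hj : j + 1 < k,
    ((f ⟨j + 1, hj⟩ : ℕ) = (f ⟨j, by omega⟩ : ℕ) + 1))

/-- `π` avoids the generalized pattern `p`. -/
def GenPattern.Avoids {k n : ℕ} (p : GenPattern k) (π : Equiv.Perm (Fin n)) : Prop :=
  ¬ ∃ f, p.Occ π f

/-- `π` contains exactly one occurrence of the generalized pattern `p`. -/
def GenPattern.ContainsOnce {k n : ℕ} (p : GenPattern k) (π : Equiv.Perm (Fin n)) : Prop :=
  ∃! f, p.Occ π f

/-- The classical pattern 1-3-2 (as a generalized pattern with no adjacencies). -/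
def pat132 : GenPattern 3 := ⟨Equiv.swap 1 2, ∅⟩

/-- `F_τ(x)`: generating function for permutations avoiding 1-3-2 and `p`. -/
noncomputable def Fgen {k : ℕ} (p : GenPattern k) : PowerSeries ℚ :=
  PowerSeries.mk fun n =>
    (Nat.card {π : Equiv.Perm (Fin n) // pat132.Avoids π ∧ p.Avoids π} : ℚ)

/-- `G_τ(x)`: generating function for permutations avoiding 1-3-2 and containing
`p` exactly once. -/
noncomputable def Ggen {k : ℕ} (p : GenPattern k) : PowerSeries ℚ :=
  PowerSeries.mk fun n =>
    (Nat.card {π : Equiv.Perm (Fin n) // pat132.Avoids π ∧ p.ContainsOnce π} : ℚ)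

/-- `H_τ(x)`: generating function for permutations containing 1-3-2 exactly once
and avoiding `p`. -/
noncomputable def Hgen {k : ℕ} (p : GenPattern k) : PowerSeries ℚ :=
  PowerSeries.mk fun n =>
    (Nat.card {π : Equiv.Perm (Fin n) // pat132.ContainsOnce π ∧ p.Avoids π} : ℚ)

/-- `Φ_τ(x)`: generating function for permutations containing both 1-3-2 and `p`
exactly once. -/
noncomputable def Phigen {k : ℕ} (p : GenPattern k) : PowerSeries ℚ :=
  PowerSeries.mk fun n =>
    (Nat.card {π : Equiv.Perm (Fin n) // pat132.ContainsOnce π ∧ p.ContainsOnce π} : ℚ)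

/-- `G_β^φ(x)`: generating function for permutations avoiding 1-3-2 and `φ` and
containing `β` exactly once. -/
noncomputable def Ggen2 {k l : ℕ} (β : GenPattern k) (φ : GenPattern l) : PowerSeries ℚ :=
  PowerSeries.mk fun n =>
    (Nat.card {π : Equiv.Perm (Fin n) //
      pat132.Avoids π ∧ φ.Avoids π ∧ β.ContainsOnce π} : ℚ)

/-- `V k = x^(k/2) · U_k(1/(2√x))`, the rescaled Chebyshev polynomials of the
second kind: `V 0 = V 1 = 1`, `V (k+2) = V (k+1) - x · V k`. -/
noncomputable def V : ℕ → PowerSeries ℚ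
  | 0 => 1
  | 1 => 1
  | (k + 2) => V (k + 1) - PowerSeries.X * V k

/-- Position `i` is a right-to-left maximum of `φ`. -/
def IsRLMax {k : ℕ} (φ : Equiv.Perm (Fin k)) (i : Fin k) : Prop :=
  ∀ j : Fin k, i < j → φ j < φ i

/-- `ρ` is the order-isomorphic reduction of the contiguous segment of `τ` of
length `t` starting at position `s` (adjacency requirements restricted to the
segment and shifted accordingly). -/
def IsReduction {k t : ℕ} (τ : GenPattern k) (s : ℕ) (ρ : GenPattern t) : Prop :=
  s + t ≤ k ∧
  (∀ (a b : Fin t) (ha : s + (a : ℕ) < k) (hb : s + (b : ℕ) < k),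
    (ρ.perm a < ρ.perm b ↔ τ.perm ⟨s + a, ha⟩ < τ.perm ⟨s + b, hb⟩)) ∧
  (∀ j : ℕ, j ∈ ρ.adj ↔ (s + j) ∈ τ.adj ∧ j + 1 < t)

-- === auxiliary development ===

def GenPattern.Contains {k n : ℕ} (p : GenPattern k) (π : Equiv.Perm (Fin n)) : Prop :=
  ∃ f, p.Occ π f

lemma avoids_iff_not_contains {k n : ℕ} (p : GenPattern k) (π : Equiv.Perm (Fin n)) :
    p.Avoids π ↔ ¬ p.Contains π := Iff.rfl

/-- To verify the order-isomorphism condition in `Occ` it is enough to check one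
direction. -/
lemma occ_order_of_mono {k n : ℕ} (u : Equiv.Perm (Fin k)) (v : Fin k → Fin n)
    (h : ∀ a b : Fin k, u a < u b → v a < v b) (a b : Fin k) :
    v a < v b ↔ u a < u b := by
  constructor
  · intro hv
    rcases lt_trichotomy (u a) (u b) with h1 | h1 | h1
    · exact h1
    · exact absurd hv (by rw [u.injective h1]; exact lt_irrefl _)
    · exact absurd hv (asymm (h _ _ h1))
  · exact h a b

def glueF (n q : ℕ) (α : Equiv.Perm (Fin q)) (β : Equiv.Perm (Fin (n - 1 - q)))
    (i : Fin n) : ℕ :=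
  if h : (i : ℕ) < q then (α ⟨i, h⟩ : ℕ) + (n - 1 - q)
  else if (i : ℕ) = q then n - 1
  else if h : (i : ℕ) - q - 1 < n - 1 - q then (β ⟨(i : ℕ) - q - 1, h⟩ : ℕ) else 0

lemma glueF_of_lt {n q : ℕ} (α : Equiv.Perm (Fin q)) (β : Equiv.Perm (Fin (n - 1 - q)))
    {i : Fin n} (h : (i : ℕ) < q) : glueF n q α β i = (α ⟨i, h⟩ : ℕ) + (n - 1 - q) := by
  simp [glueF, h]

lemma glueF_of_eq {n q : ℕ} (α : Equiv.Perm (Fin q)) (β : Equiv.Perm (Fin (n - 1 - q)))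
    {i : Fin n} (h : (i : ℕ) = q) : glueF n q α β i = n - 1 := by
  simp [glueF, h]

lemma glueF_of_gt {n q : ℕ} (α : Equiv.Perm (Fin q)) (β : Equiv.Perm (Fin (n - 1 - q)))
    {i : Fin n} (h : q < (i : ℕ)) (hb : (i : ℕ) - q - 1 < n - 1 - q) :
    glueF n q α β i = (β ⟨(i : ℕ) - q - 1, hb⟩ : ℕ) := by
  have h1 : ¬ (i : ℕ) < q := by omega
  have h2 : ¬ (i : ℕ) = q := by omega
  simp [glueF, h1, h2, hb]

lemma glueF_lt {n q : ℕ} (hq : q < n) (α : Equiv.Perm (Fin q))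
    (β : Equiv.Perm (Fin (n - 1 - q))) (i : Fin n) : glueF n q α β i < n := by
  have hn : 0 < n := i.pos
  rcases lt_trichotomy (i : ℕ) q with h | h | h
  · rw [glueF_of_lt α β h]
    have := (α ⟨i, h⟩).isLt
    omega
  · rw [glueF_of_eq α β h]; omega
  · have hb : (i : ℕ) - q - 1 < n - 1 - q := by have := i.isLt; omega
    rw [glueF_of_gt α β h hb]
    have := (β ⟨(i : ℕ) - q - 1, hb⟩).isLt
    omega

lemma glueF_inj {n q : ℕ} (hq : q < n) (α : Equiv.Perm (Fin q))
    (β : Equiv.Perm (Fin (n - 1 - q))) :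
    Function.Injective (fun i : Fin n => (⟨glueF n q α β i, glueF_lt hq α β i⟩ : Fin n)) := by
  intro i j hij
  have hij' : glueF n q α β i = glueF n q α β j := congrArg Fin.val hij
  apply Fin.ext
  rcases lt_trichotomy (i : ℕ) q with h | h | h <;>
    rcases lt_trichotomy (j : ℕ) q with h' | h' | h'
  · rw [glueF_of_lt α β h, glueF_of_lt α β h'] at hij'
    have : α ⟨i, h⟩ = α ⟨j, h'⟩ := Fin.ext (by omega)
    have := α.injective this
    simpa using congrArg Fin.val this
  · rw [glueF_of_lt α β h, glueF_of_eq α β h'] at hij'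
    have := (α ⟨i, h⟩).isLt; omega
  · have hb' : (j : ℕ) - q - 1 < n - 1 - q := by have := j.isLt; omega
    rw [glueF_of_lt α β h, glueF_of_gt α β h' hb'] at hij'
    have := (β ⟨(j : ℕ) - q - 1, hb'⟩).isLt; omega
  · rw [glueF_of_eq α β h, glueF_of_lt α β h'] at hij'
    have := (α ⟨j, h'⟩).isLt; omega
  · omega
  · have hb' : (j : ℕ) - q - 1 < n - 1 - q := by have := j.isLt; omega
    rw [glueF_of_eq α β h, glueF_of_gt α β h' hb'] at hij'
    have := (β ⟨(j : ℕ) - q - 1, hb'⟩).isLt; omega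
  · have hb : (i : ℕ) - q - 1 < n - 1 - q := by have := i.isLt; omega
    rw [glueF_of_gt α β h hb, glueF_of_lt α β h'] at hij'
    have := (β ⟨(i : ℕ) - q - 1, hb⟩).isLt; omega
  · have hb : (i : ℕ) - q - 1 < n - 1 - q := by have := i.isLt; omega
    rw [glueF_of_gt α β h hb, glueF_of_eq α β h'] at hij'
    have := (β ⟨(i : ℕ) - q - 1, hb⟩).isLt; omega
  · have hb : (i : ℕ) - q - 1 < n - 1 - q := by have := i.isLt; omega
    have hb' : (j : ℕ) - q - 1 < n - 1 - q := by have := j.isLt; omega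
    rw [glueF_of_gt α β h hb, glueF_of_gt α β h' hb'] at hij'
    have : β ⟨(i : ℕ) - q - 1, hb⟩ = β ⟨(j : ℕ) - q - 1, hb'⟩ := Fin.ext (by omega)
    have := β.injective this
    have := congrArg Fin.val this
    simp at this
    omega

noncomputable def glue (n q : ℕ) (hq : q < n) (α : Equiv.Perm (Fin q))
    (β : Equiv.Perm (Fin (n - 1 - q))) : Equiv.Perm (Fin n) :=
  Equiv.ofBijective _ ((Finite.injective_iff_bijective).mp (glueF_inj hq α β))

lemma glue_apply {n q : ℕ} (hq : q < n) (α : Equiv.Perm (Fin q))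
    (β : Equiv.Perm (Fin (n - 1 - q))) (i : Fin n) :
    (glue n q hq α β i : ℕ) = glueF n q α β i := by
  simp [glue]



section Red
variable {kk t t' n : ℕ} {T : GenPattern kk} {s s' : ℕ}
    {ρ : GenPattern t} {ρ' : GenPattern t'} {π : Equiv.Perm (Fin n)}

/-- Restricting an occurrence of a segment-reduction to a sub-segment. -/
lemma occ_of_reduction (hρ : IsReduction T s ρ) (hρ' : IsReduction T s' ρ')
    (hss : s ≤ s') (htt : s' + t' ≤ s + t) {f : Fin t → Fin n} (hf : ρ.Occ π f) :
    ρ'.Occ π (fun c : Fin t' => f ⟨s' - s + (c : ℕ), by have := c.isLt; omega⟩) := by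
  obtain ⟨ht, hord, hadj⟩ := hρ
  obtain ⟨ht', hord', hadj'⟩ := hρ'
  obtain ⟨hmono, horder, hfadj⟩ := hf
  refine ⟨?_, ?_, ?_⟩
  · intro a b hab
    exact hmono (by simp only [Fin.mk_lt_mk]; have := Fin.lt_def.mp hab; omega)
  · intro a b
    have ha : s + (s' - s + (a : ℕ)) < kk := by have := a.isLt; omega
    have hb : s + (s' - s + (b : ℕ)) < kk := by have := b.isLt; omega
    have ha' : s' + (a : ℕ) < kk := by omega
    have hb' : s' + (b : ℕ) < kk := by omega
    rw [horder, hord _ _ ha hb, hord' a b ha' hb']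
    have e1 : (⟨s + (s' - s + (a : ℕ)), ha⟩ : Fin kk) = ⟨s' + (a : ℕ), ha'⟩ :=
      Fin.ext (by simp; omega)
    have e2 : (⟨s + (s' - s + (b : ℕ)), hb⟩ : Fin kk) = ⟨s' + (b : ℕ), hb'⟩ :=
      Fin.ext (by simp; omega)
    rw [e1, e2]
  · intro j hj hjt'
    have h1 := (hadj' j).mp hj
    have h2 : (s' - s + j) ∈ ρ.adj := by
      rw [hadj]
      constructor
      · have e : s + (s' - s + j) = s' + j := by omega
        rw [e]; exact h1.1
      · omega
    have hb : (s' - s + j) + 1 < t := by omega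
    have := hfadj _ h2 hb
    have e1 : (⟨s' - s + (j + 1), by omega⟩ : Fin t) = ⟨(s' - s + j) + 1, hb⟩ :=
      Fin.ext (by simp; omega)
    simpa [e1] using this

lemma contains_of_reduction (hρ : IsReduction T s ρ) (hρ' : IsReduction T s' ρ')
    (hss : s ≤ s') (htt : s' + t' ≤ s + t) (h : ρ.Contains π) : ρ'.Contains π := by
  obtain ⟨f, hf⟩ := h
  exact ⟨_, occ_of_reduction hρ hρ' hss htt hf⟩

end Red


section Glue
variable {t n q : ℕ} (hq : q < n) (α : Equiv.Perm (Fin q)) (β : Equiv.Perm (Fin (n - 1 - q)))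

lemma glue_val_lt {i : Fin n} (h : (i : ℕ) < q) :
    (glue n q hq α β i : ℕ) = (α ⟨i, h⟩ : ℕ) + (n - 1 - q) := by
  rw [glue_apply, glueF_of_lt α β h]

lemma glue_val_eq {i : Fin n} (h : (i : ℕ) = q) :
    (glue n q hq α β i : ℕ) = n - 1 := by
  rw [glue_apply, glueF_of_eq α β h]

lemma glue_val_gt {i : Fin n} (h : q < (i : ℕ)) (hb : (i : ℕ) - q - 1 < n - 1 - q) :
    (glue n q hq α β i : ℕ) = (β ⟨(i : ℕ) - q - 1, hb⟩ : ℕ) := by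
  rw [glue_apply, glueF_of_gt α β h hb]

/-- values in the left region are at least `n - 1 - q`. -/
lemma glue_val_ge_left {i : Fin n} (h : (i : ℕ) ≤ q) :
    n - 1 - q ≤ (glue n q hq α β i : ℕ) := by
  rcases eq_or_lt_of_le h with h' | h'
  · rw [glue_val_eq hq α β h']; omega
  · rw [glue_val_lt hq α β h']; omega

lemma glue_val_lt_right {i : Fin n} (h : q < (i : ℕ)) :
    (glue n q hq α β i : ℕ) < n - 1 - q := by
  have hb : (i : ℕ) - q - 1 < n - 1 - q := by have := i.isLt; omega
  rw [glue_val_gt hq α β h hb]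
  exact (β ⟨(i : ℕ) - q - 1, hb⟩).isLt

/-- An occurrence lying entirely strictly left of the maximum gives a pattern. -/
lemma contains_left_of_occ {ρ : GenPattern t} {f : Fin t → Fin n}
    (hocc : ρ.Occ (glue n q hq α β) f) (hall : ∀ c, (f c : ℕ) < q) : ρ.Contains α := by
  obtain ⟨hmono, horder, hadj⟩ := hocc
  refine ⟨fun c => ⟨(f c : ℕ), hall c⟩, ?_, ?_, ?_⟩
  · intro a b hab
    simp only [Fin.mk_lt_mk]
    exact Fin.lt_def.mp (hmono hab)
  · intro a b
    rw [← horder a b, Fin.lt_def, Fin.lt_def]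
    beta_reduce
    have ea : ((glue n q hq α β) (f a) : ℕ) = (α ⟨(f a : ℕ), hall a⟩ : ℕ) + (n - 1 - q) :=
      glue_val_lt hq α β (hall a)
    have eb : ((glue n q hq α β) (f b) : ℕ) = (α ⟨(f b : ℕ), hall b⟩ : ℕ) + (n - 1 - q) :=
      glue_val_lt hq α β (hall b)
    rw [ea, eb]
    omega
  · intro j hj hjt
    simpa using hadj j hj hjt

lemma contains_right_of_occ {ρ : GenPattern t} {f : Fin t → Fin n}
    (hocc : ρ.Occ (glue n q hq α β) f) (hall : ∀ c, q < (f c : ℕ)) : ρ.Contains β := by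
  obtain ⟨hmono, horder, hadj⟩ := hocc
  have hb : ∀ c, (f c : ℕ) - q - 1 < n - 1 - q := fun c => by
    have := (f c).isLt; have := hall c; omega
  refine ⟨fun c => ⟨(f c : ℕ) - q - 1, hb c⟩, ?_, ?_, ?_⟩
  · intro a b hab
    simp only [Fin.mk_lt_mk]
    have := Fin.lt_def.mp (hmono hab)
    have := hall a; have := hall b
    omega
  · intro a b
    rw [← horder a b, Fin.lt_def, Fin.lt_def]
    rw [glue_val_gt hq α β (hall a) (hb a), glue_val_gt hq α β (hall b) (hb b)]
  · intro j hj hjt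
    have := hadj j hj hjt
    simp only
    have ha := hall ⟨j, by omega⟩
    omega

lemma contains_glue_left {ρ : GenPattern t} (h : ρ.Contains α) :
    ρ.Contains (glue n q hq α β) := by
  obtain ⟨f, hmono, horder, hadj⟩ := h
  have hlt : ∀ c, ((f c : ℕ)) < n := fun c => by have := (f c).isLt; omega
  refine ⟨fun c => ⟨(f c : ℕ), hlt c⟩, ?_, ?_, ?_⟩
  · intro a b hab
    simp only [Fin.mk_lt_mk]
    exact Fin.lt_def.mp (hmono hab)
  · intro a b
    have key : ∀ c, ((glue n q hq α β) ⟨(f c : ℕ), hlt c⟩ : ℕ) = (α (f c) : ℕ) + (n - 1 - q) := by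
      intro c
      have := glue_val_lt hq α β (i := ⟨(f c : ℕ), hlt c⟩) (f c).isLt
      simpa using this
    rw [← horder a b, Fin.lt_def, Fin.lt_def]
    beta_reduce
    rw [key a, key b]
    omega
  · intro j hj hjt
    simpa using hadj j hj hjt

lemma contains_glue_right {ρ : GenPattern t} (h : ρ.Contains β) :
    ρ.Contains (glue n q hq α β) := by
  obtain ⟨f, hmono, horder, hadj⟩ := h
  have hlt : ∀ c, q + 1 + (f c : ℕ) < n := fun c => by have := (f c).isLt; omega
  have hgt : ∀ c, q < ((⟨q + 1 + (f c : ℕ), hlt c⟩ : Fin n) : ℕ) := fun c => by simp; omega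
  have hbb : ∀ c, (q + 1 + (f c : ℕ)) - q - 1 < n - 1 - q := fun c => by
    have := (f c).isLt; omega
  refine ⟨fun c => ⟨q + 1 + (f c : ℕ), hlt c⟩, ?_, ?_, ?_⟩
  · intro a b hab
    simp only [Fin.mk_lt_mk]
    have := Fin.lt_def.mp (hmono hab)
    omega
  · intro a b
    rw [← horder a b, Fin.lt_def, Fin.lt_def]
    rw [glue_val_gt hq α β (hgt a) (hbb a), glue_val_gt hq α β (hgt b) (hbb b)]
    have ea : (⟨(q + 1 + (f a : ℕ)) - q - 1, hbb a⟩ : Fin (n - 1 - q)) = f a :=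
      Fin.ext (by simp; omega)
    have eb : (⟨(q + 1 + (f b : ℕ)) - q - 1, hbb b⟩ : Fin (n - 1 - q)) = f b :=
      Fin.ext (by simp; omega)
    rw [ea, eb]
  · intro j hj hjt
    have := hadj j hj hjt
    simp only
    omega

end Glue

section Av132
variable {n q : ℕ} (hq : q < n) (α : Equiv.Perm (Fin q)) (β : Equiv.Perm (Fin (n - 1 - q)))

lemma av132_glue_iff :
    pat132.Avoids (glue n q hq α β) ↔ pat132.Avoids α ∧ pat132.Avoids β := by
  constructor
  · intro h
    constructor
    · intro hc; exact h (contains_glue_left hq α β hc)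
    · intro hc; exact h (contains_glue_right hq α β hc)
  · rintro ⟨hα, hβ⟩ ⟨f, hocc⟩
    obtain ⟨hmono, horder, hadj⟩ := hocc
    have v01 : (glue n q hq α β) (f 0) < (glue n q hq α β) (f 1) :=
      (horder 0 1).mpr (by decide)
    have v02 : (glue n q hq α β) (f 0) < (glue n q hq α β) (f 2) :=
      (horder 0 2).mpr (by decide)
    have v21 : (glue n q hq α β) (f 2) < (glue n q hq α β) (f 1) :=
      (horder 2 1).mpr (by decide)
    have m01 : f 0 < f 1 := hmono (by decide)
    have m12 : f 1 < f 2 := hmono (by decide)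
    have hvlt : ∀ i : Fin n, ((glue n q hq α β) i : ℕ) < n := fun i =>
      ((glue n q hq α β) i).isLt
    rcases lt_trichotomy ((f 1 : ℕ)) q with h1 | h1 | h1
    · have h0 : (f 0 : ℕ) < q := by have := Fin.lt_def.mp m01; omega
      rcases lt_trichotomy ((f 2 : ℕ)) q with h2 | h2 | h2
      · refine hα (contains_left_of_occ hq α β ⟨hmono, horder, hadj⟩ ?_)
        intro c
        fin_cases c <;> assumption
      · have e2 : ((glue n q hq α β) (f 2) : ℕ) = n - 1 := glue_val_eq hq α β h2
        have := Fin.lt_def.mp v21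
        have := hvlt (f 1)
        omega
      · have e2 := glue_val_lt_right hq α β h2
        have e0 := glue_val_ge_left hq α β (le_of_lt h0)
        have := Fin.lt_def.mp v02
        omega
    · have h0 : (f 0 : ℕ) < q := by have := Fin.lt_def.mp m01; omega
      have h2 : q < (f 2 : ℕ) := by have := Fin.lt_def.mp m12; omega
      have e2 := glue_val_lt_right hq α β h2
      have e0 := glue_val_ge_left hq α β (le_of_lt h0)
      have := Fin.lt_def.mp v02
      omega
    · have h2 : q < (f 2 : ℕ) := by have := Fin.lt_def.mp m12; omega
      rcases lt_trichotomy ((f 0 : ℕ)) q with h0 | h0 | h0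
      · have e1 := glue_val_lt_right hq α β h1
        have e0 := glue_val_ge_left hq α β (le_of_lt h0)
        have := Fin.lt_def.mp v01
        omega
      · have e0 : ((glue n q hq α β) (f 0) : ℕ) = n - 1 := glue_val_eq hq α β h0
        have := Fin.lt_def.mp v01
        have := hvlt (f 1)
        omega
      · refine hβ (contains_right_of_occ hq α β ⟨hmono, horder, hadj⟩ ?_)
        intro c
        fin_cases c <;> assumption
end Av132

section Struct
variable {k r : ℕ} {φ : Equiv.Perm (Fin k)} {p : Fin (r + 1) → Fin k}

lemma rlmax_val_max (hp : StrictMono p) (hmax : ∀ i, IsRLMax φ (p i))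
    (hall : ∀ i : Fin k, IsRLMax φ i → ∃ j, p j = i) : (φ (p 0) : ℕ) = k - 1 := by
  have hk : 0 < k := (p 0).pos
  set z := φ.symm ⟨k - 1, by omega⟩ with hzdef
  have hφz : φ z = ⟨k - 1, by omega⟩ := Equiv.apply_symm_apply _ _
  have hv : (φ z : ℕ) = k - 1 := by rw [hφz]
  have hz : IsRLMax φ z := by
    intro j hj
    have hne : (φ j : ℕ) ≠ (φ z : ℕ) := by
      intro h
      exact absurd (φ.injective (Fin.ext h)) (ne_of_gt hj)
    have h2 := (φ j).isLt
    rw [Fin.lt_def]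
    omega
  obtain ⟨i, hi⟩ := hall z hz
  rcases eq_or_ne i 0 with h0 | h0
  · rw [← h0, hi]; exact hv
  · have h1 : (0 : Fin (r + 1)) < i := by
      rcases Fin.eq_zero_or_eq_succ i with h | ⟨j, rfl⟩
      · exact absurd h h0
      · exact Fin.succ_pos j
    have := hmax 0 (p i) (hp h1)
    rw [hi] at this
    rw [Fin.lt_def, hv] at this
    have h2 := (φ (p 0)).isLt
    omega

lemma p_last_val (hp : StrictMono p) (hall : ∀ i : Fin k, IsRLMax φ i → ∃ j, p j = i)
    (hk : 0 < k) : (p (Fin.last r) : ℕ) = k - 1 := by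
  have hz : IsRLMax φ ⟨k - 1, by omega⟩ := by
    intro j hj
    rw [Fin.lt_def] at hj
    have := j.isLt
    simp at hj
    omega
  obtain ⟨i, hi⟩ := hall _ hz
  have h1 : p i ≤ p (Fin.last r) := hp.monotone (Fin.le_last i)
  have h2 := (p (Fin.last r)).isLt
  rw [hi] at h1
  rw [Fin.le_def] at h1
  simp at h1
  omega

lemma layered (hφ : pat132.Avoids φ) (hmax : ∀ i, IsRLMax φ (p i))
    (i : Fin (r + 1)) (x y : Fin k) (hx : x ≤ p i) (hy : p i < y) : φ y < φ x := by
  rcases eq_or_lt_of_le hx with h | h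
  · rw [h]; exact hmax i y hy
  · by_contra hc
    push_neg at hc
    have hxy : x ≠ y := ne_of_lt (lt_trans h hy)
    have h1 : φ x < φ y := lt_of_le_of_ne hc (fun he => hxy (φ.injective he))
    have h2 : φ y < φ (p i) := hmax i y hy
    refine hφ ⟨fun c => if c = 0 then x else if c = 1 then p i else y, ?_, ?_, ?_⟩
    · intro a b hab
      fin_cases a <;> fin_cases b <;>
        simp only [if_true, if_false] <;>
        first
          | exact absurd hab (by decide)
          | simpa using h
          | simpa using lt_trans h hy
          | simpa using hy
    · refine occ_order_of_mono _ _ ?_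
      intro a b hab
      fin_cases a <;> fin_cases b <;>
        first
          | exact absurd hab (by decide)
          | simpa using lt_trans h1 h2
          | simpa using h1
          | simpa using h2
    · intro j hj
      simp only [pat132] at hj
      exact absurd hj (Set.notMem_empty j)

end Struct

section Main
variable {k r : ℕ} {φ : Equiv.Perm (Fin k)} {A : Set ℕ} {p : Fin (r + 1) → Fin k}
  {prefLen sufLen : Fin (r + 1) → ℕ}
  {Pref : (j : Fin (r + 1)) → GenPattern (prefLen j)}
  {Suf : (j : Fin (r + 1)) → GenPattern (sufLen j)}
  {n q : ℕ} {α : Equiv.Perm (Fin q)} {β : Equiv.Perm (Fin (n - 1 - q))}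

lemma tau_red (hA : ∀ j ∈ A, j + 1 < k ∧ ∀ i : Fin (r + 1), (p i : ℕ) ≠ j ∧ (p i : ℕ) ≠ j + 1) :
    IsReduction (⟨φ, A⟩ : GenPattern k) 0 ⟨φ, A⟩ := by
  refine ⟨by omega, ?_, ?_⟩
  · intro a b ha hb
    have ea : (⟨0 + (a : ℕ), ha⟩ : Fin k) = a := Fin.ext (by simp)
    have eb : (⟨0 + (b : ℕ), hb⟩ : Fin k) = b := Fin.ext (by simp)
    rw [ea, eb]
  · intro j
    simp only [zero_add]
    exact ⟨fun hj => ⟨hj, (hA j hj).1⟩, fun hj => hj.1⟩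

lemma build_occ (hq : q < n) (hφ : pat132.Avoids φ) (hp : StrictMono p)
    (hmax : ∀ i, IsRLMax φ (p i))
    (hall : ∀ i : Fin k, IsRLMax φ i → ∃ j, p j = i)
    (hA : ∀ j ∈ A, j + 1 < k ∧ ∀ i : Fin (r + 1), (p i : ℕ) ≠ j ∧ (p i : ℕ) ≠ j + 1)
    (hpl0 : prefLen 0 = (p 0 : ℕ))
    (hpl : ∀ j : Fin (r + 1), 1 ≤ (j : ℕ) → prefLen j = (p j : ℕ) + 1)
    (hPref : ∀ j, IsReduction ⟨φ, A⟩ 0 (Pref j))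
    (jj : Fin (r + 1)) {L : ℕ} (hL : (p jj : ℕ) + 1 + L = k)
    {g : Fin (prefLen jj) → Fin q} (hg : (Pref jj).Occ α g)
    {h : Fin L → Fin (n - 1 - q)}
    (hhmono : StrictMono h)
    (hhord : ∀ (a b : Fin L) (ha : (p jj : ℕ) + 1 + (a : ℕ) < k)
      (hb : (p jj : ℕ) + 1 + (b : ℕ) < k),
      β (h a) < β (h b) ↔ φ ⟨(p jj : ℕ) + 1 + (a : ℕ), ha⟩ < φ ⟨(p jj : ℕ) + 1 + (b : ℕ), hb⟩)
    (hhadj : ∀ jA : ℕ, jA ∈ A → (p jj : ℕ) < jA → jA + 1 < k →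
      ∀ (h1 : jA + 1 - ((p jj : ℕ) + 1) < L) (h2 : jA - ((p jj : ℕ) + 1) < L),
      (h ⟨jA + 1 - ((p jj : ℕ) + 1), h1⟩ : ℕ) = (h ⟨jA - ((p jj : ℕ) + 1), h2⟩ : ℕ) + 1) :
    GenPattern.Contains ⟨φ, A⟩ (glue n q hq α β) := by
  obtain ⟨hgmono, hgord, hgadj⟩ := hg
  obtain ⟨hpk, hPord, hPadj⟩ := hPref jj
  have hφ0 : (φ (p 0) : ℕ) = k - 1 := rlmax_val_max hp hmax hall
  have hple : prefLen jj ≤ (p jj : ℕ) + 1 := by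
    rcases Nat.eq_zero_or_pos (jj : ℕ) with h0 | h0
    · have : jj = 0 := Fin.ext h0
      rw [this, hpl0]
      have : p 0 ≤ p jj := by rw [this]
      omega
    · rw [hpl jj h0]
  have hz2 : ∀ c : ℕ, prefLen jj ≤ c → c ≤ (p jj : ℕ) →
      c = (p jj : ℕ) ∧ prefLen jj = (p jj : ℕ) ∧ (jj : ℕ) = 0 := by
    intro c hc1 hc2
    rcases Nat.eq_zero_or_pos (jj : ℕ) with h0 | h0
    · have hj0 : jj = 0 := Fin.ext h0
      have hpp : prefLen jj = (p jj : ℕ) := by rw [hj0, hpl0]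
      exact ⟨by omega, by omega, h0⟩
    · rw [hpl jj h0] at hc1
      omega
  -- total ℕ-valued versions of g and h
  have hLk : (p jj : ℕ) + 1 + L = k := hL
  set G : Fin k → ℕ := fun c =>
    if h1 : (c : ℕ) < prefLen jj then (g ⟨(c : ℕ), h1⟩ : ℕ) else 0 with hGdef
  set H : Fin k → ℕ := fun c =>
    if hb : (c : ℕ) - ((p jj : ℕ) + 1) < L then (h ⟨(c : ℕ) - ((p jj : ℕ) + 1), hb⟩ : ℕ)
    else 0 with hHdef
  have hGlt : ∀ c : Fin k, (c : ℕ) < prefLen jj → G c < q := by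
    intro c h1
    rw [hGdef]
    simp only [h1, dif_pos]
    exact (g ⟨(c : ℕ), h1⟩).isLt
  have hGeq : ∀ (c : Fin k) (h1 : (c : ℕ) < prefLen jj), G c = (g ⟨(c : ℕ), h1⟩ : ℕ) := by
    intro c h1
    rw [hGdef]
    simp only [h1, dif_pos]
  have hHb : ∀ c : Fin k, (p jj : ℕ) < (c : ℕ) → (c : ℕ) - ((p jj : ℕ) + 1) < L := by
    intro c hc
    have := c.isLt
    omega
  have hHeq : ∀ (c : Fin k) (hb : (c : ℕ) - ((p jj : ℕ) + 1) < L),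
      H c = (h ⟨(c : ℕ) - ((p jj : ℕ) + 1), hb⟩ : ℕ) := by
    intro c hb
    rw [hHdef]
    simp only [hb, dif_pos]
  have hHlt : ∀ c : Fin k, (p jj : ℕ) < (c : ℕ) → H c < n - 1 - q := by
    intro c hc
    rw [hHeq c (hHb c hc)]
    exact (h ⟨(c : ℕ) - ((p jj : ℕ) + 1), hHb c hc⟩).isLt
  -- the occurrence
  set F : Fin k → Fin n := fun c =>
    if h1 : (c : ℕ) < prefLen jj then ⟨G c, by
      rw [hGeq c h1]; have := (g ⟨(c : ℕ), h1⟩).isLt; omega⟩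
    else if h2 : (c : ℕ) ≤ (p jj : ℕ) then ⟨q, hq⟩
    else ⟨q + 1 + H c, by have := hHlt c (by omega); omega⟩
    with hFdef
  have hF1 : ∀ c : Fin k, (c : ℕ) < prefLen jj → (F c : ℕ) = G c := by
    intro c h1
    rw [hFdef]
    simp only [h1, dif_pos]
  have hF2 : ∀ c : Fin k, ¬ ((c : ℕ) < prefLen jj) → (c : ℕ) ≤ (p jj : ℕ) →
      (F c : ℕ) = q := by
    intro c h1 h2
    rw [hFdef]
    simp only [h1, h2, dif_neg, dif_pos, not_false_iff]
  have hF3 : ∀ c : Fin k, ¬ ((c : ℕ) ≤ (p jj : ℕ)) → (F c : ℕ) = q + 1 + H c := by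
    intro c h2
    have h1 : ¬ ((c : ℕ) < prefLen jj) := by omega
    rw [hFdef]
    simp only [h1, h2, dif_neg, not_false_iff]
  -- values of glue ∘ F
  have hW1 : ∀ (c : Fin k) (h1 : (c : ℕ) < prefLen jj),
      ((glue n q hq α β) (F c) : ℕ) = (α (g ⟨(c : ℕ), h1⟩) : ℕ) + (n - 1 - q) := by
    intro c h1
    have hlt : (F c : ℕ) < q := by rw [hF1 c h1]; exact hGlt c h1
    have ekey : (⟨(F c : ℕ), hlt⟩ : Fin q) = g ⟨(c : ℕ), h1⟩ := by
      apply Fin.ext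
      show (F c : ℕ) = _
      rw [hF1 c h1, hGeq c h1]
    rw [glue_val_lt hq α β hlt, ekey]
  have hW2 : ∀ c : Fin k, ¬ ((c : ℕ) < prefLen jj) → (c : ℕ) ≤ (p jj : ℕ) →
      ((glue n q hq α β) (F c) : ℕ) = n - 1 := by
    intro c h1 h2
    exact glue_val_eq hq α β (hF2 c h1 h2)
  have hW3 : ∀ (c : Fin k) (h2 : ¬ ((c : ℕ) ≤ (p jj : ℕ))),
      ((glue n q hq α β) (F c) : ℕ) = (β (h ⟨(c : ℕ) - ((p jj : ℕ) + 1),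
        hHb c (by omega)⟩) : ℕ) := by
    intro c h2
    have hgt : q < (F c : ℕ) := by rw [hF3 c h2]; omega
    have hbb : (F c : ℕ) - q - 1 < n - 1 - q := by
      rw [hF3 c h2]
      have := hHlt c (by omega)
      omega
    have ekey : (⟨(F c : ℕ) - q - 1, hbb⟩ : Fin (n - 1 - q)) =
        h ⟨(c : ℕ) - ((p jj : ℕ) + 1), hHb c (by omega)⟩ := by
      apply Fin.ext
      show (F c : ℕ) - q - 1 = _
      rw [hF3 c h2, hHeq c (hHb c (by omega))]
      omega
    rw [glue_val_gt hq α β hgt hbb, ekey]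
  -- value ordering facts on the left part
  have hWge : ∀ c : Fin k, (c : ℕ) ≤ (p jj : ℕ) →
      n - 1 - q ≤ ((glue n q hq α β) (F c) : ℕ) := by
    intro c hc
    by_cases h1 : (c : ℕ) < prefLen jj
    · rw [hW1 c h1]; omega
    · rw [hW2 c h1 hc]; omega
  have hWlt : ∀ (c : Fin k) (h2 : ¬ ((c : ℕ) ≤ (p jj : ℕ))),
      ((glue n q hq α β) (F c) : ℕ) < n - 1 - q := by
    intro c h2
    rw [hW3 c h2]
    exact (β (h ⟨(c : ℕ) - ((p jj : ℕ) + 1), hHb c (by omega)⟩)).isLt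
  refine ⟨F, ?_, ?_, ?_⟩
  · -- strict monotonicity
    intro a b hab
    have hab' : (a : ℕ) < (b : ℕ) := Fin.lt_def.mp hab
    rw [Fin.lt_def]
    by_cases ha1 : (a : ℕ) < prefLen jj
    · by_cases hb1 : (b : ℕ) < prefLen jj
      · rw [hF1 a ha1, hF1 b hb1, hGeq a ha1, hGeq b hb1]
        exact Fin.lt_def.mp (hgmono (show (⟨(a : ℕ), ha1⟩ : Fin (prefLen jj)) < ⟨(b : ℕ), hb1⟩
          from Fin.mk_lt_mk.mpr hab'))
      · by_cases hb2 : (b : ℕ) ≤ (p jj : ℕ)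
        · rw [hF1 a ha1, hF2 b hb1 hb2]
          exact hGlt a ha1
        · rw [hF1 a ha1, hF3 b hb2]
          have := hGlt a ha1
          omega
    · by_cases ha2 : (a : ℕ) ≤ (p jj : ℕ)
      · by_cases hb2 : (b : ℕ) ≤ (p jj : ℕ)
        · -- both in zone 2: impossible since zone 2 is a single point
          obtain ⟨ea, -, -⟩ := hz2 _ (by omega) ha2
          obtain ⟨eb, -, -⟩ := hz2 _ (by omega : prefLen jj ≤ (b : ℕ)) hb2
          omega
        · rw [hF2 a ha1 ha2, hF3 b hb2]
          omega
      · have hb2 : ¬ ((b : ℕ) ≤ (p jj : ℕ)) := by omega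
        rw [hF3 a ha2, hF3 b hb2]
        have hba := hHb a (by omega)
        have hbb := hHb b (by omega)
        rw [hHeq a hba, hHeq b hbb]
        have := hhmono (show (⟨(a : ℕ) - ((p jj : ℕ) + 1), hba⟩ : Fin L) <
          ⟨(b : ℕ) - ((p jj : ℕ) + 1), hbb⟩ from Fin.mk_lt_mk.mpr (by omega))
        have := Fin.lt_def.mp this
        omega
  · -- order isomorphism
    refine occ_order_of_mono _ _ ?_
    intro a b hab
    have hab' : (φ a : ℕ) < (φ b : ℕ) := Fin.lt_def.mp hab
    rw [Fin.lt_def]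
    by_cases hb1 : (b : ℕ) < prefLen jj
    · -- b in zone 1
      by_cases ha1 : (a : ℕ) < prefLen jj
      · -- both zone 1 : use pattern order
        have hpa : 0 + (a : ℕ) < k := by omega
        have hpb : 0 + (b : ℕ) < k := by omega
        have := (hPord ⟨(a : ℕ), ha1⟩ ⟨(b : ℕ), hb1⟩ hpa hpb).mpr (by
          have ea : (⟨0 + (a : ℕ), hpa⟩ : Fin k) = a := Fin.ext (by simp)
          have eb : (⟨0 + (b : ℕ), hpb⟩ : Fin k) = b := Fin.ext (by simp)
          rw [ea, eb]; exact hab)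
        have := (hgord _ _).mpr this
        rw [hW1 a ha1, hW1 b hb1]
        have := Fin.lt_def.mp this
        omega
      · by_cases ha2 : (a : ℕ) ≤ (p jj : ℕ)
        · -- a in zone 2 : a = p jj, jj = 0, φ a maximal: contradiction
          obtain ⟨ea, -, e0⟩ := hz2 _ (by omega) ha2
          have hj0 : jj = 0 := Fin.ext e0
          have hap : a = p 0 := by
            apply Fin.ext
            rw [ea, hj0]
          have := (φ b).isLt
          rw [hap, hφ0] at hab'
          omega
        · -- a in zone 3, b in zone 1 : value inequality always true
          rw [hW1 b hb1, hW3 a ha2]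
          have := (h ⟨(a : ℕ) - ((p jj : ℕ) + 1), hHb a (by omega)⟩).isLt
          omega
    · by_cases hb2 : (b : ℕ) ≤ (p jj : ℕ)
      · -- b in zone 2 : value n - 1, maximal
        by_cases ha1 : (a : ℕ) < prefLen jj
        · rw [hW1 a ha1, hW2 b hb1 hb2]
          have := (α (g ⟨(a : ℕ), ha1⟩)).isLt
          omega
        · by_cases ha2 : (a : ℕ) ≤ (p jj : ℕ)
          · -- both zone 2 : a = b, contradiction with φ a < φ b
            obtain ⟨ea, -, -⟩ := hz2 _ (by omega) ha2
            obtain ⟨eb, -, -⟩ := hz2 _ (by omega) hb2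
            have : a = b := Fin.ext (by omega)
            rw [this] at hab'
            omega
          · rw [hW2 b hb1 hb2, hW3 a ha2]
            have := (h ⟨(a : ℕ) - ((p jj : ℕ) + 1), hHb a (by omega)⟩).isLt
            omega
      · -- b in zone 3 : φ b is below everything in zones 1-2 by layering
        by_cases ha2 : (a : ℕ) ≤ (p jj : ℕ)
        · -- layering contradiction
          have hlay := layered hφ hmax jj a b (Fin.le_def.mpr (by omega))
            (Fin.lt_def.mpr (by omega))
          have := Fin.lt_def.mp hlay
          omega
        · -- both zone 3
          have hba := hHb a (by omega)
          have hbb := hHb b (by omega)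
          have hak : (p jj : ℕ) + 1 + ((a : ℕ) - ((p jj : ℕ) + 1)) < k := by
            have := a.isLt; omega
          have hbk : (p jj : ℕ) + 1 + ((b : ℕ) - ((p jj : ℕ) + 1)) < k := by
            have := b.isLt; omega
          have := (hhord ⟨(a : ℕ) - ((p jj : ℕ) + 1), hba⟩
            ⟨(b : ℕ) - ((p jj : ℕ) + 1), hbb⟩ hak hbk).mpr (by
            have ea : (⟨(p jj : ℕ) + 1 + ((a : ℕ) - ((p jj : ℕ) + 1)), hak⟩ : Fin k) = a :=
              Fin.ext (by simp; omega)
            have eb : (⟨(p jj : ℕ) + 1 + ((b : ℕ) - ((p jj : ℕ) + 1)), hbk⟩ : Fin k) = b :=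
              Fin.ext (by simp; omega)
            rw [ea, eb]; exact hab)
          rw [hW3 a ha2, hW3 b hb2]
          exact Fin.lt_def.mp this
  · -- adjacency
    intro jA hjA hjk
    obtain ⟨-, hnotp⟩ := hA jA hjA
    have hne1 : (p jj : ℕ) ≠ jA := (hnotp jj).1
    have hne2 : (p jj : ℕ) ≠ jA + 1 := (hnotp jj).2
    by_cases hz : jA + 1 < prefLen jj
    · -- both in zone 1
      have hz' : jA < prefLen jj := by omega
      have hadjP : jA ∈ (Pref jj).adj := by
        rw [hPadj jA]
        exact ⟨by simpa using hjA, hz⟩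
      have := hgadj jA hadjP hz
      have e1 : (F ⟨jA + 1, hjk⟩ : ℕ) = G ⟨jA + 1, hjk⟩ := hF1 _ hz
      have e2 : (F ⟨jA, by omega⟩ : ℕ) = G ⟨jA, by omega⟩ := hF1 _ hz'
      rw [e1, e2, hGeq _ hz, hGeq _ hz']
      convert this using 3 <;> apply Fin.ext <;> simp
    · -- both must be in zone 3
      have hjge : (p jj : ℕ) < jA := by
        rcases Nat.lt_or_ge jA (prefLen jj) with hlt | hge
        · -- jA in zone 1 or 2 but jA+1 not in zone 1
          -- then jA + 1 ≥ prefLen jj; if jA + 1 ≤ p jj then zone 2 gives jA + 1 = p jj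
          by_cases h2 : jA + 1 ≤ (p jj : ℕ)
          · obtain ⟨ea, -, -⟩ := hz2 (jA + 1) (by omega) h2
            omega
          · -- jA < prefLen jj ≤ p jj + 1 and jA + 1 > p jj so jA = p jj : contradiction
            omega
        · -- jA ≥ prefLen jj : if jA ≤ p jj, zone 2 gives jA = p jj, contradiction
          by_cases h2 : jA ≤ (p jj : ℕ)
          · obtain ⟨ea, -, -⟩ := hz2 jA hge h2
            omega
          · omega
      have ha3 : ¬ ((jA : ℕ) ≤ (p jj : ℕ)) := by omega
      have hb3 : ¬ ((jA + 1 : ℕ) ≤ (p jj : ℕ)) := by omega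
      have e1 : (F ⟨jA + 1, hjk⟩ : ℕ) = q + 1 + H ⟨jA + 1, hjk⟩ := hF3 _ hb3
      have e2 : (F ⟨jA, by omega⟩ : ℕ) = q + 1 + H ⟨jA, by omega⟩ := hF3 _ ha3
      rw [e1, e2]
      have hb1 : (jA + 1) - ((p jj : ℕ) + 1) < L := by omega
      have hb2 : jA - ((p jj : ℕ) + 1) < L := by omega
      have eH1 : H ⟨jA + 1, hjk⟩ = (h ⟨jA + 1 - ((p jj : ℕ) + 1), hb1⟩ : ℕ) := hHeq _ hb1
      have eH2 : H ⟨jA, by omega⟩ = (h ⟨jA - ((p jj : ℕ) + 1), hb2⟩ : ℕ) := hHeq _ hb2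
      rw [eH1, eH2]
      have hkey := hhadj jA hjA hjge hjk hb1 hb2
      omega

lemma occ_congr {k n : ℕ} {p : GenPattern k} {π : Equiv.Perm (Fin n)} {f f' : Fin k → Fin n}
    (h : ∀ c, f c = f' c) (hf : p.Occ π f) : p.Occ π f' := by
  have he : f = f' := funext h
  rwa [← he]

lemma prefLen_le_succ (hpl0 : prefLen 0 = (p 0 : ℕ))
    (hpl : ∀ j : Fin (r + 1), 1 ≤ (j : ℕ) → prefLen j = (p j : ℕ) + 1)
    (jj : Fin (r + 1)) : prefLen jj ≤ (p jj : ℕ) + 1 := by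
  rcases Nat.eq_zero_or_pos (jj : ℕ) with h0 | h0
  · have hj0 : jj = 0 := Fin.ext h0
    rw [hj0, hpl0]
    omega
  · rw [hpl jj h0]

lemma hitq (hp : StrictMono p) (hmax : ∀ i, IsRLMax φ (p i))
    (hall : ∀ i : Fin k, IsRLMax φ i → ∃ j, p j = i) (hq : q < n)
    {f : Fin k → Fin n} (hf : GenPattern.Occ ⟨φ, A⟩ (glue n q hq α β) f)
    {c : Fin k} (hc : (f c : ℕ) = q) : c = p 0 := by
  obtain ⟨hmono, horder, hadj⟩ := hf
  have hvc : ((glue n q hq α β) (f c) : ℕ) = n - 1 := glue_val_eq hq α β hc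
  have hmaxv : ∀ c' : Fin k, c' ≠ c → φ c' < φ c := by
    intro c' hne
    have horder' := horder c' c
    rw [← horder', Fin.lt_def, hvc]
    have h1 := ((glue n q hq α β) (f c')).isLt
    have h2 : (glue n q hq α β) (f c') ≠ (glue n q hq α β) (f c) := by
      intro h
      exact hne (hmono.injective ((glue n q hq α β).injective h))
    have h3 : ((glue n q hq α β) (f c') : ℕ) ≠ n - 1 := by
      rw [← hvc]
      exact fun h => h2 (Fin.ext h)
    omega
  have hck : (φ c : ℕ) = k - 1 := by
    by_contra hcc
    have hkpos : 0 < k := c.pos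
    set z := φ.symm ⟨k - 1, by omega⟩ with hz
    have hφz : (φ z : ℕ) = k - 1 := by rw [hz, Equiv.apply_symm_apply]
    have hzc : z ≠ c := by
      intro h
      rw [h] at hφz
      exact hcc hφz
    have := hmaxv z hzc
    rw [Fin.lt_def, hφz] at this
    have := (φ c).isLt
    omega
  have hc0 : φ c = φ (p 0) := Fin.ext (by rw [hck, rlmax_val_max hp hmax hall])
  exact φ.injective hc0

lemma pref_extract (hp : StrictMono p) (hmax : ∀ i, IsRLMax φ (p i))
    (hall : ∀ i : Fin k, IsRLMax φ i → ∃ j, p j = i)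
    (hA : ∀ j ∈ A, j + 1 < k ∧ ∀ i : Fin (r + 1), (p i : ℕ) ≠ j ∧ (p i : ℕ) ≠ j + 1)
    (hpl0 : prefLen 0 = (p 0 : ℕ))
    (hpl : ∀ j : Fin (r + 1), 1 ≤ (j : ℕ) → prefLen j = (p j : ℕ) + 1)
    (hPref : ∀ j, IsReduction ⟨φ, A⟩ 0 (Pref j)) (hq : q < n)
    {f : Fin k → Fin n} (hf : GenPattern.Occ ⟨φ, A⟩ (glue n q hq α β) f)
    (jj : Fin (r + 1)) (hall2 : ∀ c : Fin k, (c : ℕ) < prefLen jj → (f c : ℕ) ≤ q) :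
    (Pref jj).Contains α := by
  have hred := hPref jj
  have hl : 0 + prefLen jj ≤ k := hred.1
  have hemb : ∀ c : Fin (prefLen jj), (c : ℕ) < k := fun c => by have := c.isLt; omega
  have focc' : (Pref jj).Occ (glue n q hq α β) (fun c => f ⟨(c : ℕ), hemb c⟩) := by
    refine occ_congr ?_ (occ_of_reduction (tau_red hA) hred (le_refl 0) (by omega) hf)
    intro c
    exact congrArg f (Fin.ext (by simp))
  by_cases hhit : ∃ c : Fin (prefLen jj), (f ⟨(c : ℕ), hemb c⟩ : ℕ) = q
  · obtain ⟨c0, hc0⟩ := hhit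
    exfalso
    have hcp : (⟨(c0 : ℕ), hemb c0⟩ : Fin k) = p 0 :=
      hitq hp hmax hall hq ⟨(hf.1), hf.2.1, hf.2.2⟩ hc0
    have hcv : (c0 : ℕ) = (p 0 : ℕ) := by
      have := congrArg Fin.val hcp
      simpa using this
    rcases Nat.eq_zero_or_pos (jj : ℕ) with h0 | h0
    · have hj0 : jj = 0 := Fin.ext h0
      have hpp : prefLen jj = (p 0 : ℕ) := by rw [hj0, hpl0]
      have := c0.isLt
      omega
    · have hpe : prefLen jj = (p jj : ℕ) + 1 := hpl jj h0
      have hplt : (p 0 : ℕ) < (p jj : ℕ) := by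
        have h01 : (0 : Fin (r + 1)) < jj := by
          rw [Fin.lt_def]
          simpa using h0
        exact Fin.lt_def.mp (hp h01)
      have hc' : (p 0 : ℕ) + 1 < k := by have := (p jj).isLt; omega
      have hle := hall2 ⟨(p 0 : ℕ) + 1, hc'⟩ (by simpa using (by omega : (p 0 : ℕ) + 1 < prefLen jj))
      obtain ⟨hmono, -, -⟩ := hf
      have hlt2 : f (⟨(c0 : ℕ), hemb c0⟩) < f ⟨(p 0 : ℕ) + 1, hc'⟩ :=
        hmono (Fin.lt_def.mpr (by simpa using (by omega : (c0 : ℕ) < (p 0 : ℕ) + 1)))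
      rw [Fin.lt_def] at hlt2
      omega
  · push_neg at hhit
    refine contains_left_of_occ hq α β focc' (fun c => ?_)
    have h1 := hall2 ⟨(c : ℕ), hemb c⟩ (by simpa using c.isLt)
    have h2 := hhit c
    beta_reduce
    omega

lemma master (hφ : pat132.Avoids φ) (hp : StrictMono p)
    (hmax : ∀ i, IsRLMax φ (p i))
    (hall : ∀ i : Fin k, IsRLMax φ i → ∃ j, p j = i)
    (hA : ∀ j ∈ A, j + 1 < k ∧ ∀ i : Fin (r + 1), (p i : ℕ) ≠ j ∧ (p i : ℕ) ≠ j + 1)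
    (hpl0 : prefLen 0 = (p 0 : ℕ))
    (hpl : ∀ j : Fin (r + 1), 1 ≤ (j : ℕ) → prefLen j = (p j : ℕ) + 1)
    (hsl0 : sufLen 0 = k)
    (hsl : ∀ j : Fin (r + 1), 1 ≤ (j : ℕ) → sufLen j =
      k - 1 - (p ⟨(j : ℕ) - 1, Nat.lt_of_le_of_lt (Nat.sub_le _ _) j.isLt⟩ : ℕ))
    (hPref : ∀ j, IsReduction ⟨φ, A⟩ 0 (Pref j))
    (hSuf : ∀ j, IsReduction ⟨φ, A⟩ (k - sufLen j) (Suf j))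
    (hq : q < n) :
    GenPattern.Contains ⟨φ, A⟩ (glue n q hq α β) ↔
      ((Pref (Fin.last r)).Contains α ∨ (Suf 0).Contains β ∨
        ∃ (j : Fin (r + 1)) (hj : (j : ℕ) < r),
          (Pref j).Contains α ∧ (Suf ⟨(j : ℕ) + 1, by omega⟩).Contains β) := by
  have hk0 : 0 < k := (p 0).pos
  have hplast : (p (Fin.last r) : ℕ) = k - 1 := p_last_val hp hall hk0
  have hsuflen : ∀ (j1 : Fin (r + 1)) (hj1 : 1 ≤ (j1 : ℕ)),
      sufLen j1 = k - 1 - (p ⟨(j1 : ℕ) - 1, by omega⟩ : ℕ) := by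
    intro j1 hj1
    have := hsl j1 hj1
    rw [this]
  constructor
  · rintro ⟨f, hf⟩
    by_cases hR : ∀ c : Fin k, (f c : ℕ) ≤ q
    · exact Or.inl (pref_extract hp hmax hall hA hpl0 hpl hPref hq hf (Fin.last r)
        (fun c _ => hR c))
    · push_neg at hR
      obtain ⟨c1, hc1⟩ := hR
      by_cases hL : ∃ c : Fin k, (f c : ℕ) ≤ q
      · obtain ⟨c2, hc2⟩ := hL
        set S : Finset (Fin k) := Finset.univ.filter (fun c => (f c : ℕ) ≤ q) with hS
        have hSne : S.Nonempty := ⟨c2, by simp [hS, hc2]⟩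
        set cs := S.max' hSne with hcs
        have hcsle : (f cs : ℕ) ≤ q := by
          have := S.max'_mem hSne
          simp only [hS, Finset.mem_filter] at this
          exact this.2
        have hiff : ∀ c : Fin k, (f c : ℕ) ≤ q ↔ c ≤ cs := by
          intro c
          constructor
          · intro h
            exact S.le_max' c (by simp [hS, h])
          · intro h
            have hmle : f c ≤ f cs := hf.1.monotone h
            rw [Fin.le_def] at hmle
            omega
        have hrl : IsRLMax φ cs := by
          intro y hy
          have hfy : q < (f y : ℕ) := by
            by_contra hcon
            push_neg at hcon
            have h2 := (hiff y).mp hcon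
            rw [Fin.le_def] at h2
            have := Fin.lt_def.mp hy
            omega
          have horder' := hf.2.1 y cs
          rw [← horder', Fin.lt_def]
          have h1 := glue_val_lt_right hq α β hfy
          have h2 := glue_val_ge_left hq α β hcsle
          omega
        obtain ⟨jjs, hjjs⟩ := hall cs hrl
        have hcsv : (cs : ℕ) = (p jjs : ℕ) := by rw [← hjjs]
        have hjr : (jjs : ℕ) < r := by
          by_contra hcon
          push_neg at hcon
          have hje : (jjs : ℕ) = r := by have := jjs.isLt; omega
          have hlast : jjs = Fin.last r := Fin.ext (by simpa using hje)
          have hcsk : (cs : ℕ) = k - 1 := by rw [hcsv, hlast, hplast]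
          have hc1le := (hiff c1).mpr (Fin.le_def.mpr (by have := c1.isLt; omega))
          omega
        refine Or.inr (Or.inr ⟨jjs, hjr, ?_, ?_⟩)
        · refine pref_extract hp hmax hall hA hpl0 hpl hPref hq hf jjs (fun c hc => ?_)
          have hple := prefLen_le_succ hpl0 hpl jjs
          exact (hiff c).mpr (Fin.le_def.mpr (by omega))
        · set j1 : Fin (r + 1) := ⟨(jjs : ℕ) + 1, by omega⟩ with hj1
          have hj1v : (j1 : ℕ) = (jjs : ℕ) + 1 := rfl
          have hsl1 : sufLen j1 = k - 1 - (p jjs : ℕ) := by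
            have h1 := hsuflen j1 (by omega)
            have e : (⟨(j1 : ℕ) - 1, by omega⟩ : Fin (r + 1)) = jjs := Fin.ext (by simp [hj1v])
            rw [h1, e]
          have hsv : k - sufLen j1 = (p jjs : ℕ) + 1 := by
            have := (p jjs).isLt
            omega
          have hocc2 := occ_of_reduction (tau_red hA) (hSuf j1) (Nat.zero_le _)
            (by omega) hf
          refine contains_right_of_occ hq α β hocc2 (fun c => ?_)
          beta_reduce
          by_contra hcon
          push_neg at hcon
          have h2 := (hiff _).mp hcon
          rw [Fin.le_def] at h2
          simp only [Fin.val_mk] at h2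
          omega
      · push_neg at hL
        refine Or.inr (Or.inl ?_)
        have hocc2 := occ_of_reduction (tau_red hA) (hSuf 0) (Nat.zero_le _)
          (by omega) hf
        refine contains_right_of_occ hq α β hocc2 (fun c => ?_)
        beta_reduce
        exact hL _
  · rintro (h | h | ⟨j, hj, hgα, hhβ⟩)
    · obtain ⟨g, hg⟩ := h
      have hL0 : (p (Fin.last r) : ℕ) + 1 + 0 = k := by omega
      exact build_occ hq hφ hp hmax hall hA hpl0 hpl hPref (Fin.last r) hL0 hg
        (h := Fin.elim0)
        (by intro a; exact a.elim0)
        (by intro a; exact a.elim0)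
        (by intro jA _ _ _ h1 h2; omega)
    · have hcβ : GenPattern.Contains ⟨φ, A⟩ β :=
        contains_of_reduction (hSuf 0) (tau_red hA) (by omega) (by omega) h
      exact contains_glue_right hq α β hcβ
    · obtain ⟨g, hg⟩ := hgα
      set j1 : Fin (r + 1) := ⟨(j : ℕ) + 1, by omega⟩ with hj1
      have hhβ' : (Suf j1).Contains β := hhβ
      obtain ⟨h2, hh2mono, hh2ord, hh2adj⟩ := hhβ'
      have hsl1 : sufLen j1 = k - 1 - (p j : ℕ) := by
        have h1 := hsuflen j1 (by simp [hj1])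
        have e : (⟨(j1 : ℕ) - 1, by omega⟩ : Fin (r + 1)) = j := Fin.ext (by simp [hj1])
        rw [h1, e]
      have hpjk : (p j : ℕ) < k := (p j).isLt
      have hpjk1 : (p j : ℕ) < k - 1 := by
        have hjlt : j < Fin.last r := Fin.lt_def.mpr (by simpa using hj)
        have := Fin.lt_def.mp (hp hjlt)
        omega
      have hL1 : (p j : ℕ) + 1 + sufLen j1 = k := by omega
      have hsv : k - sufLen j1 = (p j : ℕ) + 1 := by omega
      obtain ⟨hsk, hsord, hsadj⟩ := hSuf j1
      refine build_occ hq hφ hp hmax hall hA hpl0 hpl hPref j hL1 hg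
        hh2mono ?_ ?_
      · intro a b ha hb
        have ha' : (k - sufLen j1) + (a : ℕ) < k := by omega
        have hb' : (k - sufLen j1) + (b : ℕ) < k := by omega
        rw [hh2ord a b, hsord a b ha' hb']
        have e1 : (⟨(k - sufLen j1) + (a : ℕ), ha'⟩ : Fin k) = ⟨(p j : ℕ) + 1 + (a : ℕ), ha⟩ :=
          Fin.ext (by simp; omega)
        have e2 : (⟨(k - sufLen j1) + (b : ℕ), hb'⟩ : Fin k) = ⟨(p j : ℕ) + 1 + (b : ℕ), hb⟩ :=
          Fin.ext (by simp; omega)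
        rw [e1, e2]
      · intro jA hjA hjgt hjk h1 hb2
        have hmem : (jA - ((p j : ℕ) + 1)) ∈ (Suf j1).adj := by
          rw [hsadj]
          constructor
          · have e : (k - sufLen j1) + (jA - ((p j : ℕ) + 1)) = jA := by omega
            rw [e]
            exact hjA
          · omega
        have := hh2adj _ hmem (by omega)
        have e1 : (⟨jA - ((p j : ℕ) + 1) + 1, by omega⟩ : Fin (sufLen j1)) =
            ⟨jA + 1 - ((p j : ℕ) + 1), h1⟩ := Fin.ext (by simp; omega)
        rw [e1] at this
        rw [this]

lemma decomp {n : ℕ} (π : Equiv.Perm (Fin n)) (hn : 0 < n) (hπ : pat132.Avoids π) :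
    ∃ (q : ℕ) (hq : q < n) (α : Equiv.Perm (Fin q)) (β : Equiv.Perm (Fin (n - 1 - q))),
      π = glue n q hq α β := by
  set qF : Fin n := π.symm ⟨n - 1, by omega⟩ with hqF
  have hq : (qF : ℕ) < n := qF.isLt
  have hπq : (π qF : ℕ) = n - 1 := by rw [hqF, Equiv.apply_symm_apply]
  have hπne : ∀ i : Fin n, i ≠ qF → (π i : ℕ) < n - 1 := by
    intro i hi
    have h1 := (π i).isLt
    have h2 : (π i : ℕ) ≠ n - 1 := by
      intro h
      exact hi (π.injective (Fin.ext (by omega) : π i = π qF))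
    omega
  have cross : ∀ i l : Fin n, (i : ℕ) < (qF : ℕ) → (qF : ℕ) < (l : ℕ) → π l < π i := by
    intro i l hi hl
    by_contra hcon
    push_neg at hcon
    have hne : π i ≠ π l := fun h =>
      (by omega : (i : ℕ) ≠ (l : ℕ)) (congrArg Fin.val (π.injective h))
    have h1 : π i < π l := lt_of_le_of_ne hcon hne
    have h2 : π l < π qF := Fin.lt_def.mpr (by
      rw [hπq]
      exact hπne l (fun h => by rw [h] at hl; omega))
    refine hπ ⟨fun c => if c = 0 then i else if c = 1 then qF else l, ?_, ?_, ?_⟩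
    · intro a b hab
      fin_cases a <;> fin_cases b <;>
        simp only [if_true, if_false] <;>
        first
          | exact absurd hab (by decide)
          | simpa using Fin.lt_def.mpr hi
          | simpa using Fin.lt_def.mpr (by omega : (i : ℕ) < (l : ℕ))
          | simpa using Fin.lt_def.mpr hl
    · refine occ_order_of_mono _ _ ?_
      intro a b hab
      fin_cases a <;> fin_cases b <;>
        first
          | exact absurd hab (by decide)
          | simpa using lt_trans h1 h2
          | simpa using h1
          | simpa using h2
    · intro j hj
      simp only [pat132] at hj
      exact absurd hj (Set.notMem_empty j)
  have hlow : ∀ l : Fin n, (qF : ℕ) < (l : ℕ) → (π l : ℕ) < n - 1 - (qF : ℕ) := by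
    intro l hl
    have hsub : (Finset.Iic qF).image π ⊆ Finset.Ioi (π l) := by
      intro v hv
      simp only [Finset.mem_image, Finset.mem_Iic] at hv
      obtain ⟨i, hi, rfl⟩ := hv
      rw [Finset.mem_Ioi]
      rcases eq_or_lt_of_le hi with he | hlt
      · rw [he]
        exact Fin.lt_def.mpr (by rw [hπq]; exact hπne l (fun h => by rw [h] at hl; omega))
      · exact cross i l (Fin.lt_def.mp hlt) hl
    have hcard := Finset.card_le_card hsub
    rw [Finset.card_image_of_injective _ π.injective, Fin.card_Iic, Fin.card_Ioi] at hcard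
    have := l.isLt
    omega
  have hupp : ∀ i : Fin n, (i : ℕ) < (qF : ℕ) → n - 1 - (qF : ℕ) ≤ (π i : ℕ) := by
    intro i hi
    have hsub : (Finset.Ioi qF).image π ⊆ Finset.Iio (π i) := by
      intro v hv
      simp only [Finset.mem_image, Finset.mem_Ioi] at hv
      obtain ⟨l, hl, rfl⟩ := hv
      rw [Finset.mem_Iio]
      exact cross i l hi (Fin.lt_def.mp hl)
    have hcard := Finset.card_le_card hsub
    rw [Finset.card_image_of_injective _ π.injective, Fin.card_Ioi, Fin.card_Iio] at hcard
    omega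
  have hib : ∀ i : Fin (qF : ℕ), (i : ℕ) < n := fun i => by have := i.isLt; omega
  have hαb : ∀ i : Fin (qF : ℕ), (π ⟨(i : ℕ), hib i⟩ : ℕ) - (n - 1 - (qF : ℕ)) < (qF : ℕ) := by
    intro i
    have h1 := hπne ⟨(i : ℕ), hib i⟩ (fun h => by
      have h' := congrArg Fin.val h
      simp only [Fin.val_mk] at h'
      have := i.isLt
      omega)
    have h2 := hupp ⟨(i : ℕ), hib i⟩ (by simpa using i.isLt)
    omega
  set αf : Fin (qF : ℕ) → Fin (qF : ℕ) := fun i =>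
    ⟨(π ⟨(i : ℕ), hib i⟩ : ℕ) - (n - 1 - (qF : ℕ)), hαb i⟩ with hαf
  have hαinj : Function.Injective αf := by
    intro i j hij
    have h1 := hupp ⟨(i : ℕ), hib i⟩ (by simpa using i.isLt)
    have h2 := hupp ⟨(j : ℕ), hib j⟩ (by simpa using j.isLt)
    have h3 : (π ⟨(i : ℕ), hib i⟩ : ℕ) = (π ⟨(j : ℕ), hib j⟩ : ℕ) := by
      have h' := congrArg Fin.val hij
      simp only [hαf, Fin.val_mk] at h'
      omega
    have h4 : (⟨(i : ℕ), hib i⟩ : Fin n) = ⟨(j : ℕ), hib j⟩ := π.injective (Fin.ext h3)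
    exact Fin.ext (by simpa using congrArg Fin.val h4)
  set α : Equiv.Perm (Fin (qF : ℕ)) :=
    Equiv.ofBijective αf (Finite.injective_iff_bijective.mp hαinj) with hα
  have hαval : ∀ i : Fin (qF : ℕ),
      (α i : ℕ) = (π ⟨(i : ℕ), hib i⟩ : ℕ) - (n - 1 - (qF : ℕ)) := by
    intro i
    rw [hα]
    simp [hαf]
  have hlb : ∀ i : Fin (n - 1 - (qF : ℕ)), (qF : ℕ) + 1 + (i : ℕ) < n := fun i => by
    have := i.isLt; omega
  set βf : Fin (n - 1 - (qF : ℕ)) → Fin (n - 1 - (qF : ℕ)) := fun i =>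
    ⟨(π ⟨(qF : ℕ) + 1 + (i : ℕ), hlb i⟩ : ℕ), hlow _ (by simp; omega)⟩ with hβf
  have hβinj : Function.Injective βf := by
    intro i j hij
    have h3 : (π ⟨(qF : ℕ) + 1 + (i : ℕ), hlb i⟩ : ℕ) =
        (π ⟨(qF : ℕ) + 1 + (j : ℕ), hlb j⟩ : ℕ) := by
      have h' := congrArg Fin.val hij
      simpa [hβf] using h'
    have h4 := π.injective (Fin.ext h3)
    refine Fin.ext ?_
    have h5 := congrArg Fin.val h4
    simp only [Fin.val_mk] at h5
    omega
  set β : Equiv.Perm (Fin (n - 1 - (qF : ℕ))) :=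
    Equiv.ofBijective βf (Finite.injective_iff_bijective.mp hβinj) with hβ
  have hβval : ∀ i : Fin (n - 1 - (qF : ℕ)),
      (β i : ℕ) = (π ⟨(qF : ℕ) + 1 + (i : ℕ), hlb i⟩ : ℕ) := by
    intro i
    rw [hβ]
    simp [hβf]
  refine ⟨(qF : ℕ), hq, α, β, ?_⟩
  apply Equiv.ext
  intro i
  apply Fin.ext
  rw [glue_apply]
  rcases lt_trichotomy (i : ℕ) (qF : ℕ) with h | h | h
  · rw [glueF_of_lt α β h, hαval ⟨(i : ℕ), h⟩]
    have h2 := hupp i h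
    have e : (⟨((⟨(i : ℕ), h⟩ : Fin (qF : ℕ)) : ℕ), hib ⟨(i : ℕ), h⟩⟩ : Fin n) = i :=
      Fin.ext (by simp)
    rw [e]
    omega
  · rw [glueF_of_eq α β h]
    have he : i = qF := Fin.ext h
    rw [he, hπq]
  · have hb : (i : ℕ) - (qF : ℕ) - 1 < n - 1 - (qF : ℕ) := by have := i.isLt; omega
    rw [glueF_of_gt α β h hb, hβval ⟨(i : ℕ) - (qF : ℕ) - 1, hb⟩]
    have e : (⟨(qF : ℕ) + 1 + ((⟨(i : ℕ) - (qF : ℕ) - 1, hb⟩ : Fin (n - 1 - (qF : ℕ))) : ℕ),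
        hlb ⟨(i : ℕ) - (qF : ℕ) - 1, hb⟩⟩ : Fin n) = i := Fin.ext (by simp; omega)
    rw [e]

lemma pref_mono (hp : StrictMono p) (hpl0 : prefLen 0 = (p 0 : ℕ))
    (hpl : ∀ j : Fin (r + 1), 1 ≤ (j : ℕ) → prefLen j = (p j : ℕ) + 1)
    (hPref : ∀ j, IsReduction ⟨φ, A⟩ 0 (Pref j)) {j j' : Fin (r + 1)} (hjj : j ≤ j')
    {a : ℕ} {γ : Equiv.Perm (Fin a)} (h : (Pref j').Contains γ) : (Pref j).Contains γ := by
  have hmon : (p j : ℕ) ≤ (p j' : ℕ) := Fin.le_def.mp (hp.monotone hjj)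
  have hlen : prefLen j ≤ prefLen j' := by
    rcases Nat.eq_zero_or_pos (j : ℕ) with h0 | h0
    · have hj0 : j = 0 := Fin.ext h0
      rcases Nat.eq_zero_or_pos (j' : ℕ) with h0' | h0'
      · have hj0' : j' = 0 := Fin.ext h0'
        rw [hj0, hj0']
      · rw [hj0, hpl0, hpl j' h0']
        have : (p 0 : ℕ) ≤ (p j' : ℕ) := by rw [← hj0]; exact hmon
        omega
    · have h0' : 1 ≤ (j' : ℕ) := le_trans h0 (Fin.le_def.mp hjj)
      rw [hpl j h0, hpl j' h0']
      omega
  exact contains_of_reduction (hPref j') (hPref j) (le_refl 0) (by omega) h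

lemma suf_mono (hp : StrictMono p) (hsl0 : sufLen 0 = k)
    (hsl : ∀ j : Fin (r + 1), 1 ≤ (j : ℕ) → sufLen j =
      k - 1 - (p ⟨(j : ℕ) - 1, Nat.lt_of_le_of_lt (Nat.sub_le _ _) j.isLt⟩ : ℕ))
    (hSuf : ∀ j, IsReduction ⟨φ, A⟩ (k - sufLen j) (Suf j)) {j j' : Fin (r + 1)} (hjj : j ≤ j')
    {b : ℕ} {γ : Equiv.Perm (Fin b)} (h : (Suf j).Contains γ) : (Suf j').Contains γ := by
  have hbj : (k - sufLen j) + sufLen j ≤ k := (hSuf j).1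
  have hbj' : (k - sufLen j') + sufLen j' ≤ k := (hSuf j').1
  have hlej : sufLen j ≤ k := by omega
  have hlej' : sufLen j' ≤ k := by omega
  have hlen : sufLen j' ≤ sufLen j := by
    rcases Nat.eq_zero_or_pos (j : ℕ) with h0 | h0
    · have hj0 : j = 0 := Fin.ext h0
      rw [hj0, hsl0]
      exact hlej'
    · have h0' : 1 ≤ (j' : ℕ) := le_trans h0 (Fin.le_def.mp hjj)
      rw [hsl j h0, hsl j' h0']
      have hmon : (p ⟨(j : ℕ) - 1, Nat.lt_of_le_of_lt (Nat.sub_le _ _) j.isLt⟩ : ℕ) ≤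
          (p ⟨(j' : ℕ) - 1, Nat.lt_of_le_of_lt (Nat.sub_le _ _) j'.isLt⟩ : ℕ) := by
        refine Fin.le_def.mp (hp.monotone (Fin.le_def.mpr ?_))
        simp only [Fin.val_mk]
        have := Fin.le_def.mp hjj
        omega
      omega
  exact contains_of_reduction (hSuf j) (hSuf j') (by omega) (by omega) h

lemma glue_eq_q {nn q q' : ℕ} (hq : q < nn) (hq' : q' < nn)
    {α : Equiv.Perm (Fin q)} {β : Equiv.Perm (Fin (nn - 1 - q))}
    {α' : Equiv.Perm (Fin q')} {β' : Equiv.Perm (Fin (nn - 1 - q'))}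
    (h : glue nn q hq α β = glue nn q' hq' α' β') : q = q' := by
  by_contra hne
  have h1 : ((glue nn q hq α β) ⟨q, hq⟩ : ℕ) = nn - 1 := glue_val_eq hq α β rfl
  have h2 : ((glue nn q hq α β) ⟨q, hq⟩ : ℕ) = ((glue nn q' hq' α' β') ⟨q, hq⟩ : ℕ) := by
    rw [h]
  rcases lt_or_gt_of_ne hne with hlt | hgt
  · have h3 := glue_val_lt hq' α' β' (i := ⟨q, hq⟩) hlt
    have := (α' ⟨q, hlt⟩).isLt
    omega
  · have h3 := glue_val_lt_right hq' α' β' (i := ⟨q, hq⟩) hgt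
    omega

lemma glue_eq_components {nn q : ℕ} (hq : q < nn) {α α' : Equiv.Perm (Fin q)}
    {β β' : Equiv.Perm (Fin (nn - 1 - q))}
    (h : glue nn q hq α β = glue nn q hq α' β') : α = α' ∧ β = β' := by
  constructor
  · apply Equiv.ext
    intro i
    have hi : ((⟨(i : ℕ), by have := i.isLt; omega⟩ : Fin nn) : ℕ) < q := by
      simpa using i.isLt
    have h1 := glue_val_lt hq α β hi
    have h2 := glue_val_lt hq α' β' hi
    have h3 : ((glue nn q hq α β) ⟨(i : ℕ), by have := i.isLt; omega⟩ : ℕ) =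
        ((glue nn q hq α' β') ⟨(i : ℕ), by have := i.isLt; omega⟩ : ℕ) := by rw [h]
    have e : (⟨((⟨(i : ℕ), by have := i.isLt; omega⟩ : Fin nn) : ℕ), hi⟩ : Fin q) = i :=
      Fin.ext (by simp)
    rw [e] at h1 h2
    apply Fin.ext
    omega
  · apply Equiv.ext
    intro i
    have hilt : q + 1 + (i : ℕ) < nn := by have := i.isLt; omega
    set pos : Fin nn := ⟨q + 1 + (i : ℕ), hilt⟩ with hposdef
    have hpos : q < (pos : ℕ) := by rw [hposdef]; simp only [Fin.val_mk]; omega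
    have hb : (pos : ℕ) - q - 1 < nn - 1 - q := by
      rw [hposdef]; simp only [Fin.val_mk]
      have := i.isLt
      omega
    have h1 := glue_val_gt hq α β hpos hb
    have h2 := glue_val_gt hq α' β' hpos hb
    have h3 : ((glue nn q hq α β) pos : ℕ) = ((glue nn q hq α' β') pos : ℕ) := by rw [h]
    have e : (⟨(pos : ℕ) - q - 1, hb⟩ : Fin (nn - 1 - q)) = i :=
      Fin.ext (by simp only [hposdef, Fin.val_mk]; omega)
    rw [e] at h1 h2
    apply Fin.ext
    omega

def GoodA (Pref : (j : Fin (r + 1)) → GenPattern (prefLen j)) (j : Fin (r + 1)) {a : ℕ}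
    (γ : Equiv.Perm (Fin a)) : Prop :=
  pat132.Avoids γ ∧ ¬ (Pref j).Contains γ ∧
    ∀ _h1 : 1 ≤ (j : ℕ),
      (Pref ⟨(j : ℕ) - 1, Nat.lt_of_le_of_lt (Nat.sub_le _ _) j.isLt⟩).Contains γ

def GoodB (Suf : (j : Fin (r + 1)) → GenPattern (sufLen j)) (j : Fin (r + 1)) {b : ℕ}
    (γ : Equiv.Perm (Fin b)) : Prop :=
  pat132.Avoids γ ∧ ¬ (Suf j).Contains γ

lemma goodA_unique (hp : StrictMono p) (hpl0 : prefLen 0 = (p 0 : ℕ))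
    (hpl : ∀ j : Fin (r + 1), 1 ≤ (j : ℕ) → prefLen j = (p j : ℕ) + 1)
    (hPref : ∀ j, IsReduction ⟨φ, A⟩ 0 (Pref j)) {a : ℕ} {γ : Equiv.Perm (Fin a)}
    {j j' : Fin (r + 1)} (h1 : GoodA Pref j γ) (h2 : GoodA Pref j' γ) : j = j' := by
  rcases lt_trichotomy j j' with hlt | he | hgt
  · exfalso
    have hge1 : 1 ≤ (j' : ℕ) := by
      have := Fin.lt_def.mp hlt
      omega
    have hcont := h2.2.2 hge1
    have hle : j ≤ (⟨(j' : ℕ) - 1, Nat.lt_of_le_of_lt (Nat.sub_le _ _) j'.isLt⟩ : Fin (r + 1)) := by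
      rw [Fin.le_def]
      have := Fin.lt_def.mp hlt
      simp only [Fin.val_mk]
      omega
    exact h1.2.1 (pref_mono hp hpl0 hpl hPref hle hcont)
  · exact he
  · exfalso
    have hge1 : 1 ≤ (j : ℕ) := by
      have := Fin.lt_def.mp hgt
      omega
    have hcont := h1.2.2 hge1
    have hle : j' ≤ (⟨(j : ℕ) - 1, Nat.lt_of_le_of_lt (Nat.sub_le _ _) j.isLt⟩ : Fin (r + 1)) := by
      rw [Fin.le_def]
      have := Fin.lt_def.mp hgt
      simp only [Fin.val_mk]
      omega
    exact h2.2.1 (pref_mono hp hpl0 hpl hPref hle hcont)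

lemma count_eq (hφ : pat132.Avoids φ) (hp : StrictMono p)
    (hmax : ∀ i, IsRLMax φ (p i))
    (hall : ∀ i : Fin k, IsRLMax φ i → ∃ j, p j = i)
    (hA : ∀ j ∈ A, j + 1 < k ∧ ∀ i : Fin (r + 1), (p i : ℕ) ≠ j ∧ (p i : ℕ) ≠ j + 1)
    (hpl0 : prefLen 0 = (p 0 : ℕ))
    (hpl : ∀ j : Fin (r + 1), 1 ≤ (j : ℕ) → prefLen j = (p j : ℕ) + 1)
    (hsl0 : sufLen 0 = k)
    (hsl : ∀ j : Fin (r + 1), 1 ≤ (j : ℕ) → sufLen j =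
      k - 1 - (p ⟨(j : ℕ) - 1, Nat.lt_of_le_of_lt (Nat.sub_le _ _) j.isLt⟩ : ℕ))
    (hPref : ∀ j, IsReduction ⟨φ, A⟩ 0 (Pref j))
    (hSuf : ∀ j, IsReduction ⟨φ, A⟩ (k - sufLen j) (Suf j)) (m : ℕ) :
    Nat.card {π : Equiv.Perm (Fin (m + 1)) //
        pat132.Avoids π ∧ GenPattern.Avoids ⟨φ, A⟩ π} =
      ∑ j : Fin (r + 1), ∑ qq : Fin (m + 1),
        Nat.card {γ : Equiv.Perm (Fin (qq : ℕ)) // GoodA Pref j γ} *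
        Nat.card {γ : Equiv.Perm (Fin (m - (qq : ℕ))) // GoodB Suf j γ} := by
  classical
  set Src := (Σ (j : Fin (r + 1)) (qq : Fin (m + 1)),
    {γ : Equiv.Perm (Fin (qq : ℕ)) // GoodA Pref j γ} ×
    {γ : Equiv.Perm (Fin (m - (qq : ℕ))) // GoodB Suf j γ}) with hSrc
  have hmas : ∀ (q : ℕ) (hq : q < m + 1) (α : Equiv.Perm (Fin q))
      (β : Equiv.Perm (Fin (m + 1 - 1 - q))),
      GenPattern.Contains ⟨φ, A⟩ (glue (m + 1) q hq α β) ↔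
      ((Pref (Fin.last r)).Contains α ∨ (Suf 0).Contains β ∨
        ∃ (j : Fin (r + 1)) (hj : (j : ℕ) < r),
          (Pref j).Contains α ∧ (Suf ⟨(j : ℕ) + 1, by omega⟩).Contains β) := by
    intro q hq α β
    exact master hφ hp hmax hall hA hpl0 hpl hsl0 hsl hPref hSuf hq
  set Ψ : Src → {π : Equiv.Perm (Fin (m + 1)) //
      pat132.Avoids π ∧ GenPattern.Avoids ⟨φ, A⟩ π} := fun x =>
    ⟨glue (m + 1) (x.2.1 : ℕ) x.2.1.isLt x.2.2.1.1 x.2.2.2.1, by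
      obtain ⟨j, qq, ⟨a1, ha1⟩, b1, hb1⟩ := x
      constructor
      · exact (av132_glue_iff qq.isLt a1 b1).mpr ⟨ha1.1, hb1.1⟩
      · intro hcont
        rcases (hmas _ qq.isLt a1 b1).mp hcont with hd | hd | ⟨j', hj', hca, hcb⟩
        · exact ha1.2.1 (pref_mono hp hpl0 hpl hPref (Fin.le_last j) hd)
        · exact hb1.2 (suf_mono hp hsl0 hsl hSuf (Fin.zero_le j) hd)
        · rcases le_or_gt j j' with hle | hlt
          · exact ha1.2.1 (pref_mono hp hpl0 hpl hPref hle hca)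
          · have hle2 : (⟨(j' : ℕ) + 1, by omega⟩ : Fin (r + 1)) ≤ j := by
              rw [Fin.le_def]
              have := Fin.lt_def.mp hlt
              simpa using this
            exact hb1.2 (suf_mono hp hsl0 hsl hSuf hle2 hcb)⟩
    with hΨ
  have hbij : Function.Bijective Ψ := by
    constructor
    · rintro ⟨j, qq, ⟨a1, ha1⟩, b1, hb1⟩ ⟨j', qq', ⟨a2, ha2⟩, b2, hb2⟩ hxy
      have hglue : glue (m + 1) (qq : ℕ) qq.isLt a1 b1 =
          glue (m + 1) (qq' : ℕ) qq'.isLt a2 b2 := congrArg Subtype.val hxy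
      have hqe : (qq : ℕ) = (qq' : ℕ) := glue_eq_q _ _ hglue
      have hqe' : qq = qq' := Fin.ext hqe
      subst hqe'
      obtain ⟨hαe, hβe⟩ := glue_eq_components qq.isLt hglue
      subst hαe
      subst hβe
      have hje : j = j' := goodA_unique hp hpl0 hpl hPref ha1 ha2
      subst hje
      rfl
    · rintro ⟨π, hπ132, hπτ⟩
      obtain ⟨q0, hq0, α0, β0, rfl⟩ := decomp π (Nat.succ_pos m) hπ132
      obtain ⟨hα132, hβ132⟩ := (av132_glue_iff hq0 α0 β0).mp hπ132
      have hnd1 : ¬ (Pref (Fin.last r)).Contains α0 := fun hc =>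
        hπτ ((hmas q0 hq0 α0 β0).mpr (Or.inl hc))
      have hnd2 : ¬ (Suf 0).Contains β0 := fun hc =>
        hπτ ((hmas q0 hq0 α0 β0).mpr (Or.inr (Or.inl hc)))
      have hnd3 : ∀ (j : Fin (r + 1)) (hj : (j : ℕ) < r), (Pref j).Contains α0 →
          ¬ (Suf ⟨(j : ℕ) + 1, by omega⟩).Contains β0 := fun j hj hca hcb =>
        hπτ ((hmas q0 hq0 α0 β0).mpr (Or.inr (Or.inr ⟨j, hj, hca, hcb⟩)))
      have hex : ∃ jn : ℕ, ∃ hl : jn < r + 1, ¬ (Pref ⟨jn, hl⟩).Contains α0 := by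
        refine ⟨r, by omega, ?_⟩
        exact hnd1
      set J := Nat.find hex with hJ
      obtain ⟨hJl0, hJnc0⟩ := Nat.find_spec hex
      have hJl : J < r + 1 := hJl0
      have hJnc : ¬ (Pref ⟨J, hJl⟩).Contains α0 := hJnc0
      set jF : Fin (r + 1) := ⟨J, hJl⟩ with hjF
      have hcontprev : ∀ _h1 : 1 ≤ J,
          (Pref ⟨J - 1, Nat.lt_of_le_of_lt (Nat.sub_le _ _) hJl⟩).Contains α0 := by
        intro h1
        by_contra hc
        have hmin := Nat.find_min hex (show J - 1 < J by omega)
        push_neg at hmin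
        exact hc (hmin (Nat.lt_of_le_of_lt (Nat.sub_le _ _) hJl))
      have hGA : GoodA Pref jF α0 := ⟨hα132, hJnc, fun h1 => hcontprev h1⟩
      have hGB : GoodB Suf jF β0 := by
        refine ⟨hβ132, ?_⟩
        rcases Nat.eq_zero_or_pos J with h0 | h0
        · have : jF = 0 := Fin.ext (by simp [hjF, h0])
          rw [this]
          exact hnd2
        · have hJr : J - 1 < r := by omega
          have hc := hcontprev h0
          have e : (⟨(J - 1) + 1, by omega⟩ : Fin (r + 1)) = jF :=
            Fin.ext (by simp only [hjF, Fin.val_mk]; omega)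
          rw [← e]
          exact hnd3 ⟨J - 1, by omega⟩ hJr hc
      refine ⟨⟨jF, ⟨q0, hq0⟩, ⟨α0, hGA⟩, ⟨β0, hGB⟩⟩, ?_⟩
      apply Subtype.ext
      rfl
  have hcards := Nat.card_eq_of_bijective Ψ hbij
  rw [← hcards]
  simp only [Nat.card_eq_fintype_card, hSrc]
  rw [Fintype.card_sigma]
  congr 1
  funext j
  rw [Fintype.card_sigma]
  congr 1
  funext qq
  rw [Fintype.card_prod]

lemma card_split (hp : StrictMono p) (hpl0 : prefLen 0 = (p 0 : ℕ))
    (hpl : ∀ j : Fin (r + 1), 1 ≤ (j : ℕ) → prefLen j = (p j : ℕ) + 1)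
    (hPref : ∀ j, IsReduction ⟨φ, A⟩ 0 (Pref j)) (j : Fin (r + 1)) (hj : 1 ≤ (j : ℕ))
    (a : ℕ) :
    Nat.card {γ : Equiv.Perm (Fin a) // GoodA Pref j γ} +
      Nat.card {γ : Equiv.Perm (Fin a) // pat132.Avoids γ ∧
        (Pref ⟨(j : ℕ) - 1, Nat.lt_of_le_of_lt (Nat.sub_le _ _) j.isLt⟩).Avoids γ} =
      Nat.card {γ : Equiv.Perm (Fin a) // pat132.Avoids γ ∧ (Pref j).Avoids γ} := by
  classical
  set jm : Fin (r + 1) := ⟨(j : ℕ) - 1, Nat.lt_of_le_of_lt (Nat.sub_le _ _) j.isLt⟩ with hjm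
  have hjmle : jm ≤ j := by
    rw [Fin.le_def, hjm]
    simp only [Fin.val_mk]
    omega
  have e1 : ∀ γ : Equiv.Perm (Fin a), GoodA Pref j γ ↔
      ((pat132.Avoids γ ∧ (Pref j).Avoids γ) ∧ (Pref jm).Contains γ) := by
    intro γ
    constructor
    · rintro ⟨h1, h2, h3⟩
      exact ⟨⟨h1, h2⟩, h3 hj⟩
    · rintro ⟨⟨h1, h2⟩, h3⟩
      exact ⟨h1, h2, fun _ => h3⟩
  have e2 : ∀ γ : Equiv.Perm (Fin a), (pat132.Avoids γ ∧ (Pref jm).Avoids γ) ↔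
      ((pat132.Avoids γ ∧ (Pref j).Avoids γ) ∧ ¬ (Pref jm).Contains γ) := by
    intro γ
    constructor
    · rintro ⟨h1, h2⟩
      exact ⟨⟨h1, fun hc => h2 (pref_mono hp hpl0 hpl hPref hjmle hc)⟩, h2⟩
    · rintro ⟨⟨h1, h2⟩, h3⟩
      exact ⟨h1, h3⟩
  rw [Nat.card_congr (Equiv.subtypeEquivRight e1), Nat.card_congr (Equiv.subtypeEquivRight e2)]
  have key : ∀ (P Q : Equiv.Perm (Fin a) → Prop),
      Nat.card {γ : Equiv.Perm (Fin a) // P γ ∧ Q γ} +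
        Nat.card {γ : Equiv.Perm (Fin a) // P γ ∧ ¬ Q γ} =
      Nat.card {γ : Equiv.Perm (Fin a) // P γ} := by
    intro P Q
    simp only [Nat.card_eq_fintype_card, Fintype.card_subtype]
    rw [← Finset.filter_filter, ← Finset.filter_filter,
      Finset.card_filter_add_card_filter_not]
  exact key (fun γ => pat132.Avoids γ ∧ (Pref j).Avoids γ) (fun γ => (Pref jm).Contains γ)

lemma card_zero (hk : 0 < k) :
    Nat.card {π : Equiv.Perm (Fin 0) //
      pat132.Avoids π ∧ GenPattern.Avoids ⟨φ, A⟩ π} = 1 := by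
  haveI : Unique {π : Equiv.Perm (Fin 0) //
      pat132.Avoids π ∧ GenPattern.Avoids ⟨φ, A⟩ π} := by
    refine ⟨⟨⟨1, ?_, ?_⟩⟩, ?_⟩
    · rintro ⟨f, -⟩
      exact (f 0).elim0
    · rintro ⟨f, -⟩
      exact (f ⟨0, hk⟩).elim0
    · rintro ⟨π, -⟩
      exact Subtype.ext (Equiv.ext fun x => x.elim0)
  exact Nat.card_unique

end Main

/-- Theorem 1 (gencase): for a 1-3-2-avoiding generalized pattern `τ = ⟨φ, A⟩`
with right-to-left maxima of `φ` at positions `p 0 < p 1 < ⋯ < p r` and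
adjacencies only inside the blocks between the maxima,
`F_τ = 1 + x·∑_{j=0}^r (F_{π^j} − F_{π^{j−1}})·F_{σ^j}`. -/
theorem statement0 (k r : ℕ) (φ : Equiv.Perm (Fin k)) (A : Set ℕ)
    (hφ : pat132.Avoids φ)
    (p : Fin (r + 1) → Fin k) (hp : StrictMono p)
    (hmax : ∀ i, IsRLMax φ (p i))
    (hall : ∀ i : Fin k, IsRLMax φ i → ∃ j, p j = i)
    (hA : ∀ j ∈ A, j + 1 < k ∧ ∀ i : Fin (r + 1), (p i : ℕ) ≠ j ∧ (p i : ℕ) ≠ j + 1)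
    (prefLen sufLen : Fin (r + 1) → ℕ)
    (hpl0 : prefLen 0 = (p 0 : ℕ))
    (hpl : ∀ j : Fin (r + 1), 1 ≤ (j : ℕ) → prefLen j = (p j : ℕ) + 1)
    (hsl0 : sufLen 0 = k)
    (hsl : ∀ j : Fin (r + 1), 1 ≤ (j : ℕ) → sufLen j =
      k - 1 - (p ⟨(j : ℕ) - 1, Nat.lt_of_le_of_lt (Nat.sub_le _ _) j.isLt⟩ : ℕ))
    (Pref : (j : Fin (r + 1)) → GenPattern (prefLen j))
    (Suf : (j : Fin (r + 1)) → GenPattern (sufLen j))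
    (hPref : ∀ j, IsReduction ⟨φ, A⟩ 0 (Pref j))
    (hSuf : ∀ j, IsReduction ⟨φ, A⟩ (k - sufLen j) (Suf j))
    (prevF : Fin (r + 1) → PowerSeries ℚ)
    (hprev0 : prevF 0 = 0)
    (hprev : ∀ j : Fin (r + 1), 1 ≤ (j : ℕ) → prevF j =
      Fgen (Pref ⟨(j : ℕ) - 1, Nat.lt_of_le_of_lt (Nat.sub_le _ _) j.isLt⟩)) :
    Fgen ⟨φ, A⟩ = 1 + PowerSeries.X *
      ∑ j : Fin (r + 1), (Fgen (Pref j) - prevF j) * Fgen (Suf j) := by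
  have hk : 0 < k := (p 0).pos
  apply PowerSeries.ext
  intro n
  rw [map_add]
  cases n with
  | zero =>
    have hXz : (PowerSeries.coeff 0)
        (PowerSeries.X * ∑ j : Fin (r + 1), (Fgen (Pref j) - prevF j) * Fgen (Suf j)) = 0 := by
      simp
    rw [hXz, PowerSeries.coeff_one]
    simp only [if_pos rfl, add_zero, Fgen, PowerSeries.coeff_mk]
    rw [card_zero hk]
    norm_num
  | succ m =>
    rw [PowerSeries.coeff_succ_X_mul, PowerSeries.coeff_one, if_neg (Nat.succ_ne_zero m),
      map_sum, zero_add]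
    have hL : (PowerSeries.coeff (m + 1)) (Fgen (⟨φ, A⟩ : GenPattern k)) =
        ((∑ j : Fin (r + 1), ∑ qq : Fin (m + 1),
          Nat.card {γ : Equiv.Perm (Fin (qq : ℕ)) // GoodA Pref j γ} *
          Nat.card {γ : Equiv.Perm (Fin (m - (qq : ℕ))) // GoodB Suf j γ} : ℕ) : ℚ) := by
      simp only [Fgen, PowerSeries.coeff_mk]
      rw [count_eq hφ hp hmax hall hA hpl0 hpl hsl0 hsl hPref hSuf m]
    rw [hL]
    push_cast
    refine Finset.sum_congr rfl ?_
    intro j _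
    rw [PowerSeries.coeff_mul, Finset.Nat.sum_antidiagonal_eq_sum_range_succ_mk]
    have hconv : (∑ qq : Fin (m + 1),
        ((Nat.card {γ : Equiv.Perm (Fin (qq : ℕ)) // GoodA Pref j γ} : ℕ) : ℚ) *
        ((Nat.card {γ : Equiv.Perm (Fin (m - (qq : ℕ))) // GoodB Suf j γ} : ℕ) : ℚ)) =
        ∑ qq ∈ Finset.range (m + 1),
        ((Nat.card {γ : Equiv.Perm (Fin qq) // GoodA Pref j γ} : ℕ) : ℚ) *
        ((Nat.card {γ : Equiv.Perm (Fin (m - qq)) // GoodB Suf j γ} : ℕ) : ℚ) :=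
      Fin.sum_univ_eq_sum_range (fun t =>
        ((Nat.card {γ : Equiv.Perm (Fin t) // GoodA Pref j γ} : ℕ) : ℚ) *
        ((Nat.card {γ : Equiv.Perm (Fin (m - t)) // GoodB Suf j γ} : ℕ) : ℚ)) (m + 1)
    rw [hconv]
    refine Finset.sum_congr rfl ?_
    intro qq _
    have hB : ((Nat.card {γ : Equiv.Perm (Fin (m - qq)) // GoodB Suf j γ} : ℕ) : ℚ) =
        (PowerSeries.coeff (m - qq)) (Fgen (Suf j)) := by
      simp only [Fgen, PowerSeries.coeff_mk]
      rfl
    have hA' : ((Nat.card {γ : Equiv.Perm (Fin qq) // GoodA Pref j γ} : ℕ) : ℚ) =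
        (PowerSeries.coeff qq) (Fgen (Pref j)) - (PowerSeries.coeff qq) (prevF j) := by
      rcases Nat.eq_zero_or_pos (j : ℕ) with h0 | h0
      · have hj0 : j = 0 := Fin.ext h0
        rw [hj0, hprev0]
        simp only [map_zero, sub_zero, Fgen, PowerSeries.coeff_mk]
        have hiff : ∀ γ : Equiv.Perm (Fin qq), GoodA Pref 0 γ ↔
            (pat132.Avoids γ ∧ (Pref 0).Avoids γ) := by
          intro γ
          constructor
          · rintro ⟨h1, h2, -⟩
            exact ⟨h1, h2⟩
          · rintro ⟨h1, h2⟩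
            exact ⟨h1, h2, fun h => absurd h (by omega)⟩
        rw [Nat.card_congr (Equiv.subtypeEquivRight hiff)]
      · rw [hprev j h0]
        simp only [Fgen, PowerSeries.coeff_mk]
        have hsplit := card_split hp hpl0 hpl hPref j h0 qq
        have hc : ((Nat.card {γ : Equiv.Perm (Fin qq) // GoodA Pref j γ} : ℕ) : ℚ) +
            ((Nat.card {γ : Equiv.Perm (Fin qq) // pat132.Avoids γ ∧
              (Pref ⟨(j : ℕ) - 1, Nat.lt_of_le_of_lt (Nat.sub_le _ _) j.isLt⟩).Avoids γ} : ℕ) : ℚ) =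
            ((Nat.card {γ : Equiv.Perm (Fin qq) // pat132.Avoids γ ∧
              (Pref j).Avoids γ} : ℕ) : ℚ) := by
          exact_mod_cast congrArg (fun t : ℕ => (t : ℚ)) hsplit
        linarith
    rw [hA', hB, map_sub]
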